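/- arXiv:1503.05503 — 2 statements merged into one kernel-verified Lean document; each statement's English description precedes it below -/
import Mathlib

section
/- Let n be a nonnegative integer and z1, z2 ∈ H with z2 − z1 ∉ ℤ. Define Ξ_n^0(z1, z2, s) = 4 ∑_{b=1}^∞ (conj(z2) − conj(z1) − b)^n (z2 − conj(z1) − b)^n / (|z2 − z1 − b|^{2s} · |conj(z2) − z1 − b|^{2s}). Then: (i) the series converges absolutely for Re(s) > (2n+1)/4; (ii) the function s ↦ Ξ_n^0(z1, z2, s) − 4ζ(4s − 2n) extends holomorphically to the half-plane {s : Re(s) > n/2}; consequently Ξ_n^0 extends meromorphically to {s : Re(s) > n/2} whose only pole there is a simple pole at s = (2n+1)/4 with residue 1. -/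
open Complex Filter Topology

noncomputable section

/-- The `b`-th term of the series `Ξ_n⁰(z₁, z₂, s)` (for `b ≥ 1`). -/
def Xi0Term (n : ℕ) (z1 z2 s : ℂ) (b : ℕ+) : ℂ :=
  (starRingEnd ℂ z2 - starRingEnd ℂ z1 - (b : ℂ)) ^ n * (z2 - starRingEnd ℂ z1 - (b : ℂ)) ^ n /
    ((‖z2 - z1 - (b : ℂ)‖ : ℂ) ^ (2 * s) * (‖starRingEnd ℂ z2 - z1 - (b : ℂ)‖ : ℂ) ^ (2 * s))

/-- `Ξ_n⁰(z₁, z₂, s) = 4 ∑_{b≥1} (…)`, the `c = 0` part of `Ξ_n`. -/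
def Xi0 (n : ℕ) (z1 z2 s : ℂ) : ℂ := 4 * ∑' b : ℕ+, Xi0Term n z1 z2 s b

/-- `‖exp u - 1‖ ≤ ‖u‖ e^{‖u‖}`. -/
lemma xi_norm_exp_sub_one_le (u : ℂ) : ‖Complex.exp u - 1‖ ≤ ‖u‖ * Real.exp ‖u‖ := by
  have h : ∀ x ∈ Metric.closedBall (0:ℂ) ‖u‖, HasDerivWithinAt Complex.exp (Complex.exp x)
      (Metric.closedBall (0:ℂ) ‖u‖) x := fun x _ => (Complex.hasDerivAt_exp x).hasDerivWithinAt
  have hb : ∀ x ∈ Metric.closedBall (0:ℂ) ‖u‖, ‖Complex.exp x‖ ≤ Real.exp ‖u‖ := by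
    intro x hx
    have hx' : ‖x‖ ≤ ‖u‖ := by simpa using Metric.mem_closedBall.1 hx
    rw [Complex.norm_exp]
    refine Real.exp_le_exp.2 (le_trans (le_abs_self _) ?_)
    exact le_trans (Complex.abs_re_le_norm x) hx'
  have h2 := (convex_closedBall (0:ℂ) ‖u‖).norm_image_sub_le_of_norm_hasDerivWithin_le h hb
    (Metric.mem_closedBall_self (norm_nonneg u)) (Metric.mem_closedBall.2 (by rw [dist_zero_right]))
  calc ‖Complex.exp u - 1‖ = ‖Complex.exp u - Complex.exp 0‖ := by rw [Complex.exp_zero]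
    _ ≤ Real.exp ‖u‖ * ‖u - 0‖ := h2
    _ = ‖u‖ * Real.exp ‖u‖ := by rw [sub_zero]; ring

lemma xi_norm_pow_sub_pow_le (x y : ℂ) (M : ℝ) (n : ℕ) (hx : ‖x‖ ≤ M) (hy : ‖y‖ ≤ M) :
    ‖x ^ n - y ^ n‖ ≤ (n : ℝ) * M ^ (n - 1) * ‖x - y‖ := by
  induction n with
  | zero => simp
  | succ m ih =>
    have hM : 0 ≤ M := le_trans (norm_nonneg x) hx
    have key : x ^ (m+1) - y ^ (m+1) = (x - y) * x ^ m + y * (x ^ m - y ^ m) := by ring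
    calc ‖x ^ (m+1) - y ^ (m+1)‖ ≤ ‖(x - y) * x ^ m‖ + ‖y * (x ^ m - y ^ m)‖ := by
          rw [key]; exact norm_add_le _ _
      _ ≤ ‖x - y‖ * M ^ m + M * ((m : ℝ) * M ^ (m - 1) * ‖x - y‖) := by
          gcongr
          · rw [norm_mul]
            gcongr
            calc ‖x ^ m‖ = ‖x‖ ^ m := norm_pow x m
              _ ≤ M ^ m := by gcongr
          · rw [norm_mul]
            gcongr
      _ ≤ (↑(m+1) : ℝ) * M ^ (m + 1 - 1) * ‖x - y‖ := by
          rcases Nat.eq_zero_or_pos m with hm | hm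
          · subst hm; simp [mul_comm]
          · have hMM : M * M ^ (m - 1) = M ^ m := by
              rw [← pow_succ']
              congr 1
              omega
            rw [Nat.add_sub_cancel]
            have h3 : M * ((m:ℝ) * M ^ (m-1) * ‖x - y‖) = (m:ℝ) * M ^ m * ‖x - y‖ := by
              rw [← hMM]; ring
            push_cast
            linarith [h3]
  
lemma xi_abs_log_le {δ t : ℝ} (hδ : 0 < δ) (hδ1 : δ ≤ 1) (ht : δ ≤ t) :
    |Real.log t| ≤ δ⁻¹ * |t - 1| := by
  have h : ∀ x ∈ Set.Ici δ, HasDerivWithinAt Real.log x⁻¹ (Set.Ici δ) x :=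
    fun x hx => (Real.hasDerivAt_log (by linarith [Set.mem_Ici.1 hx])).hasDerivWithinAt
  have hb : ∀ x ∈ Set.Ici δ, ‖x⁻¹‖ ≤ δ⁻¹ := by
    intro x hx
    rw [Real.norm_eq_abs, abs_inv, abs_of_pos (by linarith [Set.mem_Ici.1 hx] : (0:ℝ) < x)]
    exact inv_anti₀ hδ (Set.mem_Ici.1 hx)
  have := (convex_Ici δ).norm_image_sub_le_of_norm_hasDerivWithin_le h hb
    (Set.mem_Ici.2 hδ1) (Set.mem_Ici.2 ht)
  simpa [Real.log_one] using this

lemma xi_lower_bound (α : ℂ) (hα : ∀ b : ℕ+, α - (b : ℂ) ≠ 0) :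
    ∃ δ : ℝ, 0 < δ ∧ δ ≤ 1 ∧ ∀ b : ℕ+, δ * b ≤ ‖α - (b : ℂ)‖ := by
  set N : ℕ := ⌈2 * ‖α‖⌉₊ + 1 with hN
  have hNpos : 0 < (N : ℝ) := by positivity
  have hSne : (Finset.Icc 1 N).Nonempty := ⟨1, Finset.mem_Icc.2 ⟨le_refl 1, by omega⟩⟩
  set m : ℝ := (Finset.Icc 1 N).inf' hSne (fun k => ‖α - (k : ℂ)‖) with hm
  have hmpos : 0 < m := by
    rw [hm, Finset.lt_inf'_iff]
    intro k hk
    have hk1 : 1 ≤ k := (Finset.mem_Icc.1 hk).1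
    have := hα ⟨k, hk1⟩
    simpa [norm_pos_iff] using this
  refine ⟨min (1/2) (m / N), by positivity, le_trans (min_le_left _ _) (by norm_num), ?_⟩
  intro b
  rcases le_or_gt (b : ℕ) N with hb | hb
  · have hbm : m ≤ ‖α - (b : ℂ)‖ := by
      have hmem : (b : ℕ) ∈ Finset.Icc 1 N := Finset.mem_Icc.2 ⟨b.one_le, hb⟩
      have := Finset.inf'_le (s := Finset.Icc 1 N) (f := fun k : ℕ => ‖α - (k : ℂ)‖) hmem
      exact this
    calc min (1/2) (m / N) * (b : ℝ) ≤ (m / N) * N := by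
          apply mul_le_mul (min_le_right _ _) (by exact_mod_cast hb) (by positivity)
          positivity
      _ = m := by field_simp
      _ ≤ ‖α - (b : ℂ)‖ := hbm
  · have hb2 : 2 * ‖α‖ ≤ (b : ℝ) := by
      calc 2 * ‖α‖ ≤ (⌈2 * ‖α‖⌉₊ : ℝ) := Nat.le_ceil _
        _ ≤ (N : ℝ) := by exact_mod_cast Nat.le_succ _
        _ ≤ (b : ℝ) := by exact_mod_cast hb.le
    have hnb : ‖α - (b : ℂ)‖ ≥ (b : ℝ) - ‖α‖ := by
      calc (b : ℝ) - ‖α‖ = ‖((b : ℕ) : ℂ)‖ - ‖α‖ := by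
            rw [Complex.norm_natCast]
      _ ≤ ‖((b : ℕ) : ℂ) - α‖ := norm_sub_norm_le _ _
      _ = ‖α - (b : ℂ)‖ := by rw [norm_sub_rev]
    calc min (1/2) (m / N) * (b : ℝ) ≤ (1/2) * (b : ℝ) := by
          apply mul_le_mul_of_nonneg_right (min_le_left _ _) (by positivity)
      _ ≤ (b : ℝ) - ‖α‖ := by linarith
      _ ≤ ‖α - (b : ℂ)‖ := hnb

lemma xiTerm_eq (n : ℕ) (z1 z2 s : ℂ) (b : ℕ+)
    (hα : starRingEnd ℂ z2 - starRingEnd ℂ z1 - (b : ℂ) ≠ 0)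
    (hβ : z2 - starRingEnd ℂ z1 - (b : ℂ) ≠ 0) :
    Xi0Term n z1 z2 s b =
      ((starRingEnd ℂ z2 - starRingEnd ℂ z1 - (b : ℂ)) * (z2 - starRingEnd ℂ z1 - (b : ℂ))) ^ n *
        Complex.exp (-(2 * s) *
          ((Real.log (‖starRingEnd ℂ z2 - starRingEnd ℂ z1 - (b : ℂ)‖ *
            ‖z2 - starRingEnd ℂ z1 - (b : ℂ)‖) : ℝ) : ℂ)) := by
  set x := ‖starRingEnd ℂ z2 - starRingEnd ℂ z1 - (b : ℂ)‖ with hxdef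
  set y := ‖z2 - starRingEnd ℂ z1 - (b : ℂ)‖ with hydef
  have hx : 0 < x := norm_pos_iff.2 hα
  have hy : 0 < y := norm_pos_iff.2 hβ
  have e1 : ‖z2 - z1 - (b : ℂ)‖ = x := by
    rw [hxdef, ← RCLike.norm_conj (K := ℂ) (z2 - z1 - (b : ℂ))]
    congr 1
    push_cast [map_sub]
    simp
  have e2 : ‖starRingEnd ℂ z2 - z1 - (b : ℂ)‖ = y := by
    rw [hydef, ← RCLike.norm_conj (K := ℂ) (starRingEnd ℂ z2 - z1 - (b : ℂ))]
    congr 1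
    push_cast [map_sub]
    simp
  rw [Xi0Term, e1, e2, mul_pow]
  congr 1
  rw [← mul_cpow_ofReal_nonneg (norm_nonneg _) (norm_nonneg _)]
  rw [show ((x : ℂ) * (y : ℂ)) = ((x * y : ℝ) : ℂ) by push_cast; ring]
  rw [Complex.cpow_def_of_ne_zero (by exact_mod_cast (mul_pos hx hy).ne' : ((x * y : ℝ) : ℂ) ≠ 0)]
  rw [← Complex.ofReal_log (mul_pos hx hy).le]
  rw [div_eq_mul_inv, ← Complex.exp_neg]
  ring_nf

lemma xiTerm_norm (n : ℕ) (z1 z2 s : ℂ) (b : ℕ+)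
    (hα : starRingEnd ℂ z2 - starRingEnd ℂ z1 - (b : ℂ) ≠ 0)
    (hβ : z2 - starRingEnd ℂ z1 - (b : ℂ) ≠ 0) :
    ‖Xi0Term n z1 z2 s b‖ =
      (‖starRingEnd ℂ z2 - starRingEnd ℂ z1 - (b : ℂ)‖ * ‖z2 - starRingEnd ℂ z1 - (b : ℂ)‖) ^
        ((n : ℝ) - 2 * s.re) := by
  set x := ‖starRingEnd ℂ z2 - starRingEnd ℂ z1 - (b : ℂ)‖
  set y := ‖z2 - starRingEnd ℂ z1 - (b : ℂ)‖
  have hx : 0 < x := norm_pos_iff.2 hα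
  have hy : 0 < y := norm_pos_iff.2 hβ
  have hr : 0 < x * y := mul_pos hx hy
  rw [xiTerm_eq n z1 z2 s b hα hβ, norm_mul, norm_pow, norm_mul]
  rw [Complex.norm_exp]
  have hre : (-(2 * s) * ((Real.log (x * y) : ℝ) : ℂ)).re = -(2 * s.re) * Real.log (x * y) := by
    simp [Complex.mul_re]
  rw [hre]
  have h1 : ‖starRingEnd ℂ z2 - starRingEnd ℂ z1 - (b : ℂ)‖ * ‖z2 - starRingEnd ℂ z1 - (b : ℂ)‖
      = x * y := rfl
  rw [h1]
  have h2 : Real.exp (-(2 * s.re) * Real.log (x * y)) = (x * y) ^ (-(2 * s.re)) := by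
    rw [Real.rpow_def_of_pos hr, mul_comm]
  rw [h2]
  have h3 : ‖(starRingEnd ℂ z2 - starRingEnd ℂ z1 - (b : ℂ)) * (z2 - starRingEnd ℂ z1 - (b : ℂ))‖
      = x * y := norm_mul _ _
  rw [← Real.rpow_natCast (x * y) n, ← Real.rpow_add hr]
  ring_nf

lemma xi_inv_cpow (b : ℕ+) (w : ℂ) :
    1 / ((b : ℕ) : ℂ) ^ w = Complex.exp (-w * ((Real.log (b : ℕ) : ℝ) : ℂ)) := by
  have hb : ((b : ℕ) : ℂ) ≠ 0 := by exact_mod_cast (Nat.cast_pos.2 b.pos).ne'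
  rw [Complex.cpow_def_of_ne_zero hb]
  have : Complex.log ((b : ℕ) : ℂ) = ((Real.log (b : ℕ) : ℝ) : ℂ) := by
    rw [← Complex.ofReal_natCast, Complex.ofReal_log (Nat.cast_nonneg _)]
  rw [this, one_div, ← Complex.exp_neg]
  ring_nf

set_option maxHeartbeats 1000000 in
lemma xi_E_bound (n : ℕ) (z1 z2 s : ℂ) (b : ℕ+) (C1 δ0 M : ℝ)
    (hα : starRingEnd ℂ z2 - starRingEnd ℂ z1 - (b : ℂ) ≠ 0)
    (hβ : z2 - starRingEnd ℂ z1 - (b : ℂ) ≠ 0)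
    (hC1 : 0 ≤ C1) (hδ0 : 0 < δ0) (hδ01 : δ0 ≤ 1)
    (hqs : ‖(starRingEnd ℂ z2 - starRingEnd ℂ z1 - (b : ℂ)) * (z2 - starRingEnd ℂ z1 - (b : ℂ)) -
        ((b : ℕ) : ℂ) ^ 2‖ ≤ C1 * ((b : ℕ) : ℝ))
    (hlo : δ0 * ((b : ℕ) : ℝ) ^ 2 ≤
        ‖starRingEnd ℂ z2 - starRingEnd ℂ z1 - (b : ℂ)‖ * ‖z2 - starRingEnd ℂ z1 - (b : ℂ)‖)
    (hup : ‖starRingEnd ℂ z2 - starRingEnd ℂ z1 - (b : ℂ)‖ * ‖z2 - starRingEnd ℂ z1 - (b : ℂ)‖ ≤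
        (1 + C1) * ((b : ℕ) : ℝ) ^ 2)
    (hM : ‖s‖ ≤ M) (hM0 : 0 ≤ M) :
    ‖Xi0Term n z1 z2 s b - 1 / ((b : ℕ) : ℂ) ^ (4 * s - 2 * (n : ℂ))‖ ≤
      ((n : ℝ) * (1 + C1) ^ (n - 1) * C1 + 2 * M * C1 / δ0) * Real.exp (2 * M * C1 / δ0) *
        ((b : ℕ) : ℝ) ^ (2 * (n : ℝ) - 4 * s.re - 1) := by
  set α := starRingEnd ℂ z2 - starRingEnd ℂ z1 with hαdef
  set β := z2 - starRingEnd ℂ z1 with hβdef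
  set B : ℝ := ((b : ℕ) : ℝ) with hBdef
  have hB1 : 1 ≤ B := by
    have h1 : (1 : ℕ) ≤ (b : ℕ) := b.one_le
    rw [hBdef]
    exact_mod_cast h1
  have hB0 : 0 < B := lt_of_lt_of_le one_pos hB1
  set q : ℂ := (α - b) * (β - b) with hqdef
  set r : ℝ := ‖α - (b : ℂ)‖ * ‖β - (b : ℂ)‖ with hrdef
  have hr_pos : 0 < r := mul_pos (norm_pos_iff.2 hα) (norm_pos_iff.2 hβ)
  have hrq : r = ‖q‖ := (norm_mul _ _).symm
  set ℓ : ℝ := Real.log B with hℓdef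
  set L : ℝ := Real.log r with hLdef
  set m : ℝ := L - 2 * ℓ with hmdef
  set A : ℝ := 2 * M * C1 / δ0 with hAdef
  have hA0 : 0 ≤ A := by positivity
  -- bound on |m|
  have habs_rB : |r - B ^ 2| ≤ C1 * B := by
    have h1 : B ^ 2 = ‖((b : ℕ) : ℂ) ^ 2‖ := by
      rw [norm_pow, Complex.norm_natCast]
    calc |r - B ^ 2| = |‖q‖ - ‖((b : ℕ) : ℂ) ^ 2‖| := by rw [hrq, h1]
      _ ≤ ‖q - ((b : ℕ) : ℂ) ^ 2‖ := abs_norm_sub_norm_le _ _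
      _ ≤ C1 * B := hqs
  have hm_eq : m = Real.log (r / B ^ 2) := by
    rw [hmdef, Real.log_div hr_pos.ne' (by positivity), Real.log_pow]
    push_cast
    ring
  have ht_lo : δ0 ≤ r / B ^ 2 := by
    rw [le_div_iff₀ (by positivity)]
    linarith [hlo]
  have hm_abs : |m| ≤ (C1 / δ0) / B := by
    rw [hm_eq]
    calc |Real.log (r / B ^ 2)| ≤ δ0⁻¹ * |r / B ^ 2 - 1| := xi_abs_log_le hδ0 hδ01 ht_lo
      _ = δ0⁻¹ * (|r - B ^ 2| / B ^ 2) := by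
          congr 1
          rw [show r / B ^ 2 - 1 = (r - B ^ 2) / B ^ 2 by field_simp, abs_div,
            abs_of_pos (by positivity : (0:ℝ) < B ^ 2)]
      _ ≤ δ0⁻¹ * ((C1 * B) / B ^ 2) := by gcongr
      _ = (C1 / δ0) / B := by field_simp
  have hm_abs' : |m| ≤ C1 / δ0 := le_trans hm_abs (div_le_self (by positivity) hB1)
  -- the exponential pieces
  have hu_norm : ‖-(2 * s) * (m : ℂ)‖ ≤ A / B := by
    have he : ‖-(2 * s) * (m : ℂ)‖ = 2 * ‖s‖ * |m| := by
      rw [norm_mul, norm_neg, norm_mul]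
      rw [Complex.norm_real, Real.norm_eq_abs]
      norm_num
    rw [he]
    calc 2 * ‖s‖ * |m| ≤ (2 * M) * ((C1 / δ0) / B) := by
          refine mul_le_mul (by nlinarith [norm_nonneg s]) hm_abs (abs_nonneg m) (by positivity)
      _ = A / B := by rw [hAdef]; field_simp
  have hu_norm' : ‖-(2 * s) * (m : ℂ)‖ ≤ A := by
    refine le_trans hu_norm ?_
    rw [div_le_iff₀ hB0]
    nlinarith
  have hexp1 : ‖Complex.exp (-(2 * s) * (m : ℂ))‖ ≤ Real.exp A := by
    rw [Complex.norm_exp]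
    exact Real.exp_le_exp.2 (le_trans (le_trans (le_abs_self _)
      (Complex.abs_re_le_norm _)) hu_norm')
  have hexp2 : ‖Complex.exp (-(2 * s) * (m : ℂ)) - 1‖ ≤ (A / B) * Real.exp A := by
    calc ‖Complex.exp (-(2 * s) * (m : ℂ)) - 1‖
        ≤ ‖-(2 * s) * (m : ℂ)‖ * Real.exp ‖-(2 * s) * (m : ℂ)‖ := xi_norm_exp_sub_one_le _
      _ ≤ (A / B) * Real.exp A := by
          apply mul_le_mul hu_norm (Real.exp_le_exp.2 hu_norm') (Real.exp_nonneg _) (by positivity)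
  -- pow difference bound
  have hq_norm : ‖q‖ ≤ (1 + C1) * B ^ 2 := by rw [← hrq]; exact hup
  have hb2_norm : ‖((b : ℕ) : ℂ) ^ 2‖ ≤ (1 + C1) * B ^ 2 := by
    rw [norm_pow, Complex.norm_natCast]
    nlinarith [sq_nonneg B]
  have hpow : ‖q ^ n - (((b : ℕ) : ℂ) ^ 2) ^ n‖ ≤
      (n : ℝ) * (1 + C1) ^ (n - 1) * C1 * B ^ (2 * n - 1) := by
    have h := xi_norm_pow_sub_pow_le q (((b : ℕ) : ℂ) ^ 2) ((1 + C1) * B ^ 2) n hq_norm hb2_norm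
    rcases Nat.eq_zero_or_pos n with hn | hn
    · subst hn; simpa using h
    have e1 : (B ^ 2) ^ (n - 1) * (C1 * B) = C1 * B ^ (2 * n - 1) := by
      rw [← pow_mul]
      have e2 : 2 * n - 1 = 2 * (n - 1) + 1 := by omega
      rw [e2, pow_succ]
      ring
    calc ‖q ^ n - (((b : ℕ) : ℂ) ^ 2) ^ n‖
        ≤ (n : ℝ) * ((1 + C1) * B ^ 2) ^ (n - 1) * ‖q - ((b : ℕ) : ℂ) ^ 2‖ := h
      _ ≤ (n : ℝ) * ((1 + C1) * B ^ 2) ^ (n - 1) * (C1 * B) := by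
          refine mul_le_mul_of_nonneg_left hqs (by positivity)
      _ = (n : ℝ) * (1 + C1) ^ (n - 1) * ((B ^ 2) ^ (n - 1) * (C1 * B)) := by
          rw [mul_pow]; ring
      _ = (n : ℝ) * (1 + C1) ^ (n - 1) * C1 * B ^ (2 * n - 1) := by rw [e1]; ring
  -- rewrite E in exponential form
  have hterm := xiTerm_eq n z1 z2 s b hα hβ
  have hzterm := xi_inv_cpow b (4 * s - 2 * (n : ℂ))
  have hsplit : Complex.exp (-(2 * s) * (L : ℂ)) =
      Complex.exp (-(4 * s) * (ℓ : ℂ)) * Complex.exp (-(2 * s) * (m : ℂ)) := by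
    rw [← Complex.exp_add]
    congr 1
    rw [hmdef]
    push_cast
    ring
  have hzsplit : Complex.exp (-(4 * s - 2 * (n : ℂ)) * (ℓ : ℂ)) =
      Complex.exp (-(4 * s) * (ℓ : ℂ)) * (((b : ℕ) : ℂ) ^ 2) ^ n := by
    have hexpl : Complex.exp ((ℓ : ℂ)) = ((b : ℕ) : ℂ) := by
      rw [hℓdef, ← Complex.ofReal_exp, Real.exp_log hB0]
      simp [hBdef]
    have : Complex.exp (-(4 * s - 2 * (n : ℂ)) * (ℓ : ℂ)) =
        Complex.exp (-(4 * s) * (ℓ : ℂ)) * Complex.exp ((2 * n : ℕ) * (ℓ : ℂ)) := by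
      rw [← Complex.exp_add]
      congr 1
      push_cast
      ring
    rw [this, Complex.exp_nat_mul, hexpl, ← pow_mul, mul_comm 2 n, pow_mul]
  have hE_eq : Xi0Term n z1 z2 s b - 1 / ((b : ℕ) : ℂ) ^ (4 * s - 2 * (n : ℂ)) =
      Complex.exp (-(4 * s) * (ℓ : ℂ)) *
        ((q ^ n - (((b : ℕ) : ℂ) ^ 2) ^ n) * Complex.exp (-(2 * s) * (m : ℂ)) +
          (((b : ℕ) : ℂ) ^ 2) ^ n * (Complex.exp (-(2 * s) * (m : ℂ)) - 1)) := by
    rw [hterm, hzterm]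
    rw [show starRingEnd ℂ z2 - starRingEnd ℂ z1 - (b : ℂ) = α - (b : ℂ) from rfl,
      show z2 - starRingEnd ℂ z1 - (b : ℂ) = β - (b : ℂ) from rfl]
    rw [show ‖α - (b : ℂ)‖ * ‖β - (b : ℂ)‖ = r from rfl,
      show Real.log r = L from rfl,
      show (α - (b : ℂ)) * (β - (b : ℂ)) = q from rfl]
    rw [hsplit, hzsplit]
    ring
  rw [hE_eq]
  have houter : ‖Complex.exp (-(4 * s) * (ℓ : ℂ))‖ = B ^ (-(4 * s.re)) := by
    rw [Complex.norm_exp, Real.rpow_def_of_pos hB0, ← hℓdef]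
    congr 1
    simp [Complex.mul_re]
    ring
  have hBn : ‖(((b : ℕ) : ℂ) ^ 2) ^ n‖ = B ^ (2 * n) := by
    rw [norm_pow, norm_pow, Complex.norm_natCast, ← pow_mul, ← hBdef]
  calc ‖Complex.exp (-(4 * s) * (ℓ : ℂ)) *
        ((q ^ n - (((b : ℕ) : ℂ) ^ 2) ^ n) * Complex.exp (-(2 * s) * (m : ℂ)) +
          (((b : ℕ) : ℂ) ^ 2) ^ n * (Complex.exp (-(2 * s) * (m : ℂ)) - 1))‖
      = B ^ (-(4 * s.re)) * ‖(q ^ n - (((b : ℕ) : ℂ) ^ 2) ^ n) * Complex.exp (-(2 * s) * (m : ℂ)) +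
          (((b : ℕ) : ℂ) ^ 2) ^ n * (Complex.exp (-(2 * s) * (m : ℂ)) - 1)‖ := by
        rw [norm_mul, houter]
    _ ≤ B ^ (-(4 * s.re)) *
        (((n : ℝ) * (1 + C1) ^ (n - 1) * C1 * B ^ (2 * n - 1)) * Real.exp A +
          B ^ (2 * n) * ((A / B) * Real.exp A)) := by
        apply mul_le_mul_of_nonneg_left _ (Real.rpow_nonneg hB0.le _)
        calc ‖(q ^ n - (((b : ℕ) : ℂ) ^ 2) ^ n) * Complex.exp (-(2 * s) * (m : ℂ)) +
              (((b : ℕ) : ℂ) ^ 2) ^ n * (Complex.exp (-(2 * s) * (m : ℂ)) - 1)‖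
            ≤ ‖q ^ n - (((b : ℕ) : ℂ) ^ 2) ^ n‖ * ‖Complex.exp (-(2 * s) * (m : ℂ))‖ +
              ‖(((b : ℕ) : ℂ) ^ 2) ^ n‖ * ‖Complex.exp (-(2 * s) * (m : ℂ)) - 1‖ := by
              refine le_trans (norm_add_le _ _) ?_
              rw [norm_mul, norm_mul]
          _ ≤ ((n : ℝ) * (1 + C1) ^ (n - 1) * C1 * B ^ (2 * n - 1)) * Real.exp A +
              B ^ (2 * n) * ((A / B) * Real.exp A) := by
              rw [hBn]
              refine add_le_add (mul_le_mul hpow hexp1 (norm_nonneg _)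
                (le_trans (norm_nonneg _) hpow)) ?_
              refine mul_le_mul_of_nonneg_left hexp2 (by positivity)
    _ ≤ ((n : ℝ) * (1 + C1) ^ (n - 1) * C1 + A) * Real.exp A *
          B ^ (2 * (n : ℝ) - 4 * s.re - 1) := by
        set K1 : ℝ := (n : ℝ) * (1 + C1) ^ (n - 1) * C1 with hK1def
        have hK10 : 0 ≤ K1 := by positivity
        set eA : ℝ := Real.exp A with heAdef
        have heA0 : 0 < eA := Real.exp_pos A
        have key : K1 * B ^ (2 * n - 1 : ℕ) * eA + B ^ (2 * n : ℕ) * ((A / B) * eA) ≤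
            (K1 + A) * eA * B ^ (2 * (n : ℝ) - 1) := by
          rcases Nat.eq_zero_or_pos n with hn | hn
          · subst hn
            have hK1 : K1 = 0 := by simp [hK1def]
            rw [hK1]
            apply le_of_eq
            norm_num
            rw [Real.rpow_neg_one, div_eq_mul_inv]
            ring
          · refine le_of_eq ?_
            have e1 : B ^ (2 * n - 1 : ℕ) = B ^ (2 * (n : ℝ) - 1) := by
              rw [← Real.rpow_natCast B (2 * n - 1)]
              congr 1
              push_cast [Nat.cast_sub (by omega : 1 ≤ 2 * n)]
              ring
            have e2 : B ^ (2 * n : ℕ) * (A / B) = A * B ^ (2 * (n : ℝ) - 1) := by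
              rw [← Real.rpow_natCast B (2 * n), div_eq_mul_inv, ← Real.rpow_neg_one B,
                show (2 * (n : ℝ) - 1) = (2 * n : ℕ) + (-1 : ℝ) by push_cast; ring,
                Real.rpow_add hB0]
              ring
            calc K1 * B ^ (2 * n - 1 : ℕ) * eA + B ^ (2 * n : ℕ) * ((A / B) * eA)
                = K1 * B ^ (2 * (n : ℝ) - 1) * eA + (B ^ (2 * n : ℕ) * (A / B)) * eA := by
                  rw [e1]; ring
              _ = (K1 + A) * eA * B ^ (2 * (n : ℝ) - 1) := by rw [e2]; ring
        calc B ^ (-(4 * s.re)) * (K1 * B ^ (2 * n - 1 : ℕ) * eA + B ^ (2 * n : ℕ) * ((A / B) * eA))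
            ≤ B ^ (-(4 * s.re)) * ((K1 + A) * eA * B ^ (2 * (n : ℝ) - 1)) := by
              apply mul_le_mul_of_nonneg_left key (Real.rpow_nonneg hB0.le _)
          _ = (K1 + A) * eA * B ^ (2 * (n : ℝ) - 4 * s.re - 1) := by
              rw [show (2 * (n : ℝ) - 4 * s.re - 1) = -(4 * s.re) + (2 * (n : ℝ) - 1) by ring,
                Real.rpow_add hB0]
              ring

lemma xi_summable_rpow {e : ℝ} (he : e < -1) : Summable (fun b : ℕ+ => ((b : ℕ) : ℝ) ^ e) :=
  (Real.summable_nat_rpow.2 he).comp_injective PNat.coe_injective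

set_option maxHeartbeats 2000000 in
/-- (i) the series `Ξ_n⁰` converges absolutely for `Re(s) > (2n+1)/4`;
(ii) `s ↦ Ξ_n⁰(z₁,z₂,s) − 4ζ(4s−2n)` extends holomorphically to `{Re(s) > n/2}`;
(iii) consequently `Ξ_n⁰` extends meromorphically to `{Re(s) > n/2}`, whose only pole there
is a simple pole at `s = (2n+1)/4` with residue `1`. -/
theorem Xi0_convergence_and_continuation (n : ℕ) (z1 z2 : ℂ)
    (hz1 : 0 < z1.im) (hz2 : 0 < z2.im) (hdiff : ∀ b : ℤ, z2 - z1 ≠ (b : ℂ)) :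
    (∀ s : ℂ, (2 * (n : ℝ) + 1) / 4 < s.re →
      Summable (fun b : ℕ+ => ‖Xi0Term n z1 z2 s b‖)) ∧
    (∃ G : ℂ → ℂ, DifferentiableOn ℂ G {s : ℂ | (n : ℝ) / 2 < s.re} ∧
      ∀ s : ℂ, (2 * (n : ℝ) + 1) / 4 < s.re →
        G s = Xi0 n z1 z2 s - 4 * riemannZeta (4 * s - 2 * n)) ∧
    (∃ H : ℂ → ℂ, DifferentiableOn ℂ H {s : ℂ | (n : ℝ) / 2 < s.re} ∧
      ∀ s : ℂ, (2 * (n : ℝ) + 1) / 4 < s.re →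
        Xi0 n z1 z2 s = (s - ((2 * n + 1 : ℂ) / 4))⁻¹ + H s) := by
  have hαne : ∀ b : ℕ+, starRingEnd ℂ z2 - starRingEnd ℂ z1 - (b : ℂ) ≠ 0 := by
    intro b h
    have h1 : starRingEnd ℂ z2 - starRingEnd ℂ z1 = ((b : ℕ) : ℂ) := by
      have := sub_eq_zero.mp h
      exact_mod_cast this
    have h2 : z2 - z1 = ((b : ℕ) : ℂ) := by
      have := congrArg (starRingEnd ℂ) h1
      simpa [map_sub, Complex.conj_conj] using this
    exact hdiff ((b : ℕ) : ℤ) (by rw [h2]; push_cast; ring)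
  have hβne : ∀ b : ℕ+, z2 - starRingEnd ℂ z1 - (b : ℂ) ≠ 0 := by
    intro b h
    have := congrArg Complex.im h
    simp only [Complex.sub_im, Complex.conj_im, Complex.zero_im] at this
    simp at this
    linarith
  have hγne : ∀ b : ℕ+, starRingEnd ℂ z2 - z1 - (b : ℂ) ≠ 0 := by
    intro b h
    apply hβne b
    have h2 := congrArg (starRingEnd ℂ) h
    rw [map_sub, map_sub, Complex.conj_conj, map_natCast, map_zero] at h2
    exact h2
  have hz2z1 : ∀ b : ℕ+, z2 - z1 - (b : ℂ) ≠ 0 := by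
    intro b h
    exact hdiff ((b : ℕ) : ℤ) (by push_cast; linear_combination h)
  obtain ⟨δa, hδa0, hδa1, hδa⟩ := xi_lower_bound _ hαne
  obtain ⟨δb, hδb0, hδb1, hδb⟩ := xi_lower_bound _ hβne
  set δ0 : ℝ := δa * δb with hδ0def
  have hδ00 : 0 < δ0 := mul_pos hδa0 hδb0
  have hδ01 : δ0 ≤ 1 := by nlinarith
  have hlo : ∀ b : ℕ+, δ0 * ((b : ℕ) : ℝ) ^ 2 ≤
      ‖starRingEnd ℂ z2 - starRingEnd ℂ z1 - (b : ℂ)‖ * ‖z2 - starRingEnd ℂ z1 - (b : ℂ)‖ := by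
    intro b
    have h1 := hδa b
    have h2 := hδb b
    have hb0 : (0 : ℝ) ≤ ((b : ℕ) : ℝ) := by positivity
    calc δ0 * ((b : ℕ) : ℝ) ^ 2 = (δa * ((b : ℕ) : ℝ)) * (δb * ((b : ℕ) : ℝ)) := by
          rw [hδ0def]; ring
      _ ≤ ‖starRingEnd ℂ z2 - starRingEnd ℂ z1 - (b : ℂ)‖ * ‖z2 - starRingEnd ℂ z1 - (b : ℂ)‖ :=
          mul_le_mul h1 h2 (by positivity) (norm_nonneg _)
  set C1 : ℝ := ‖starRingEnd ℂ z2 - starRingEnd ℂ z1‖ * ‖z2 - starRingEnd ℂ z1‖ +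
      (‖starRingEnd ℂ z2 - starRingEnd ℂ z1‖ + ‖z2 - starRingEnd ℂ z1‖) with hC1def
  have hC10 : 0 ≤ C1 := by positivity
  have hqs : ∀ b : ℕ+, ‖(starRingEnd ℂ z2 - starRingEnd ℂ z1 - (b : ℂ)) *
      (z2 - starRingEnd ℂ z1 - (b : ℂ)) - ((b : ℕ) : ℂ) ^ 2‖ ≤ C1 * ((b : ℕ) : ℝ) := by
    intro b
    have hb1 : (1 : ℝ) ≤ ((b : ℕ) : ℝ) := by exact_mod_cast b.one_le
    set A := starRingEnd ℂ z2 - starRingEnd ℂ z1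
    set B := z2 - starRingEnd ℂ z1
    have he : (A - (b : ℂ)) * (B - (b : ℂ)) - ((b : ℕ) : ℂ) ^ 2 =
        A * B - (A + B) * ((b : ℕ) : ℂ) := by push_cast; ring
    rw [he]
    calc ‖A * B - (A + B) * ((b : ℕ) : ℂ)‖ ≤ ‖A * B‖ + ‖(A + B) * ((b : ℕ) : ℂ)‖ :=
          norm_sub_le _ _
      _ ≤ ‖A‖ * ‖B‖ + (‖A‖ + ‖B‖) * ((b : ℕ) : ℝ) := by
          rw [norm_mul, norm_mul, Complex.norm_natCast]
          have := norm_add_le A B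
          have h0 : (0:ℝ) ≤ ((b : ℕ) : ℝ) := by positivity
          nlinarith [norm_nonneg (A + B)]
      _ ≤ C1 * ((b : ℕ) : ℝ) := by
          rw [hC1def]
          nlinarith [norm_nonneg A, norm_nonneg B, mul_nonneg (norm_nonneg A) (norm_nonneg B)]
  have hup : ∀ b : ℕ+, ‖starRingEnd ℂ z2 - starRingEnd ℂ z1 - (b : ℂ)‖ *
      ‖z2 - starRingEnd ℂ z1 - (b : ℂ)‖ ≤ (1 + C1) * ((b : ℕ) : ℝ) ^ 2 := by
    intro b
    have hb1 : (1 : ℝ) ≤ ((b : ℕ) : ℝ) := by exact_mod_cast b.one_le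
    have h1 : ‖starRingEnd ℂ z2 - starRingEnd ℂ z1 - (b : ℂ)‖ * ‖z2 - starRingEnd ℂ z1 - (b : ℂ)‖
        = ‖(starRingEnd ℂ z2 - starRingEnd ℂ z1 - (b : ℂ)) * (z2 - starRingEnd ℂ z1 - (b : ℂ))‖ :=
      (norm_mul _ _).symm
    rw [h1]
    calc ‖(starRingEnd ℂ z2 - starRingEnd ℂ z1 - (b : ℂ)) * (z2 - starRingEnd ℂ z1 - (b : ℂ))‖
        = ‖((starRingEnd ℂ z2 - starRingEnd ℂ z1 - (b : ℂ)) * (z2 - starRingEnd ℂ z1 - (b : ℂ)) -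
            ((b : ℕ) : ℂ) ^ 2) + ((b : ℕ) : ℂ) ^ 2‖ := by ring_nf
      _ ≤ ‖(starRingEnd ℂ z2 - starRingEnd ℂ z1 - (b : ℂ)) * (z2 - starRingEnd ℂ z1 - (b : ℂ)) -
            ((b : ℕ) : ℂ) ^ 2‖ + ‖((b : ℕ) : ℂ) ^ 2‖ := norm_add_le _ _
      _ ≤ C1 * ((b : ℕ) : ℝ) + ((b : ℕ) : ℝ) ^ 2 := by
          have h2 : ‖((b : ℕ) : ℂ) ^ 2‖ = ((b : ℕ) : ℝ) ^ 2 := by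
            rw [norm_pow, Complex.norm_natCast]
          rw [h2]
          exact add_le_add (hqs b) le_rfl
      _ ≤ (1 + C1) * ((b : ℕ) : ℝ) ^ 2 := by
          have hBB : ((b : ℕ) : ℝ) ≤ ((b : ℕ) : ℝ) ^ 2 := by nlinarith
          nlinarith [mul_le_mul_of_nonneg_left hBB hC10]
  -- part (i)
  have part1 : ∀ s : ℂ, (2 * (n : ℝ) + 1) / 4 < s.re →
      Summable (fun b : ℕ+ => ‖Xi0Term n z1 z2 s b‖) := by
    intro s hs
    set c : ℝ := (n : ℝ) - 2 * s.re with hcdef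
    have hc0 : c ≤ 0 := by rw [hcdef]; linarith
    have h2c : 2 * c < -1 := by rw [hcdef]; linarith
    have hsum : Summable (fun b : ℕ+ => δ0 ^ c * ((b : ℕ) : ℝ) ^ (2 * c)) :=
      (xi_summable_rpow h2c).mul_left _
    apply Summable.of_nonneg_of_le (fun b => norm_nonneg _) _ hsum
    intro b
    have hb0 : (0 : ℝ) < ((b : ℕ) : ℝ) := by positivity
    rw [xiTerm_norm n z1 z2 s b (hαne b) (hβne b)]
    calc (‖starRingEnd ℂ z2 - starRingEnd ℂ z1 - (b : ℂ)‖ *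
          ‖z2 - starRingEnd ℂ z1 - (b : ℂ)‖) ^ c
        ≤ (δ0 * ((b : ℕ) : ℝ) ^ 2) ^ c :=
          Real.rpow_le_rpow_of_nonpos (by positivity) (hlo b) hc0
      _ = δ0 ^ c * (((b : ℕ) : ℝ) ^ 2) ^ c := Real.mul_rpow hδ00.le (by positivity)
      _ = δ0 ^ c * ((b : ℕ) : ℝ) ^ (2 * c) := by
          congr 1
          rw [show ((b : ℕ) : ℝ) ^ 2 = ((b : ℕ) : ℝ) ^ ((2 : ℕ) : ℝ) by
            rw [Real.rpow_natCast], ← Real.rpow_mul hb0.le]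
          norm_num
  -- the E function and its sum
  set E : ℕ+ → ℂ → ℂ :=
    fun b s => Xi0Term n z1 z2 s b - 1 / ((b : ℕ) : ℂ) ^ (4 * s - 2 * (n : ℂ)) with hEdef
  have hEdiff : ∀ b : ℕ+, Differentiable ℂ (E b) := by
    intro b
    have hxne : ((‖z2 - z1 - (b : ℂ)‖ : ℝ) : ℂ) ≠ 0 :=
      Complex.ofReal_ne_zero.mpr (norm_ne_zero_iff.mpr (hz2z1 b))
    have hyne : ((‖starRingEnd ℂ z2 - z1 - (b : ℂ)‖ : ℝ) : ℂ) ≠ 0 :=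
      Complex.ofReal_ne_zero.mpr (norm_ne_zero_iff.mpr (hγne b))
    have hbne : ((b : ℕ) : ℂ) ≠ 0 := by
      exact_mod_cast (Nat.cast_pos.2 b.pos).ne'
    intro s
    apply DifferentiableAt.sub
    · have hds : DifferentiableAt ℂ (fun s : ℂ => 2 * s) s := differentiableAt_id.const_mul 2
      have d1 : DifferentiableAt ℂ
          (fun s : ℂ => ((‖z2 - z1 - (b : ℂ)‖ : ℝ) : ℂ) ^ (2 * s)) s :=
        hds.const_cpow (Or.inl hxne)
      have d2 : DifferentiableAt ℂ
          (fun s : ℂ => ((‖starRingEnd ℂ z2 - z1 - (b : ℂ)‖ : ℝ) : ℂ) ^ (2 * s)) s :=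
        hds.const_cpow (Or.inl hyne)
      have hne1 : ((‖z2 - z1 - (b : ℂ)‖ : ℝ) : ℂ) ^ (2 * s) ≠ 0 := by
        rw [Ne, Complex.cpow_eq_zero_iff]
        rintro ⟨h1, -⟩
        exact hxne h1
      have hne2 : ((‖starRingEnd ℂ z2 - z1 - (b : ℂ)‖ : ℝ) : ℂ) ^ (2 * s) ≠ 0 := by
        rw [Ne, Complex.cpow_eq_zero_iff]
        rintro ⟨h1, -⟩
        exact hyne h1
      exact (differentiableAt_const _).div (d1.mul d2) (mul_ne_zero hne1 hne2)
    · have hds : DifferentiableAt ℂ (fun s : ℂ => 4 * s - 2 * (n : ℂ)) s :=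
        (differentiableAt_id.const_mul 4).sub (differentiableAt_const _)
      exact (differentiableAt_const _).div (hds.const_cpow (Or.inl hbne))
        (by rw [Ne, Complex.cpow_eq_zero_iff]; rintro ⟨h1, -⟩; exact hbne h1)
  have hGdiff : DifferentiableOn ℂ (fun s => ∑' b : ℕ+, E b s) {s : ℂ | (n : ℝ) / 2 < s.re} := by
    intro s0 hs0
    have hs0' : (n : ℝ) / 2 < s0.re := hs0
    set ρ : ℝ := (s0.re - (n : ℝ) / 2) / 2 with hρdef
    have hρ0 : 0 < ρ := by rw [hρdef]; linarith
    set σ1 : ℝ := s0.re - ρ with hσ1def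
    have hσ1 : (n : ℝ) / 2 < σ1 := by rw [hσ1def, hρdef]; linarith
    set M : ℝ := ‖s0‖ + ρ with hMdef
    have hM0 : 0 ≤ M := by positivity
    set K : ℝ := ((n : ℝ) * (1 + C1) ^ (n - 1) * C1 + 2 * M * C1 / δ0) *
      Real.exp (2 * M * C1 / δ0) with hKdef
    have hK0 : 0 ≤ K := by positivity
    have hexp : 2 * (n : ℝ) - 4 * σ1 - 1 < -1 := by linarith
    have hsum : Summable (fun b : ℕ+ => K * ((b : ℕ) : ℝ) ^ (2 * (n : ℝ) - 4 * σ1 - 1)) :=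
      (xi_summable_rpow hexp).mul_left _
    have hopen : IsOpen (Metric.ball s0 ρ) := Metric.isOpen_ball
    have hbound : ∀ (b : ℕ+) (s : ℂ), s ∈ Metric.ball s0 ρ →
        ‖E b s‖ ≤ K * ((b : ℕ) : ℝ) ^ (2 * (n : ℝ) - 4 * σ1 - 1) := by
      intro b s hsU
      have hdist : ‖s - s0‖ < ρ := by
        rw [← dist_eq_norm]
        exact Metric.mem_ball.1 hsU
      have hnorms : ‖s‖ ≤ M := by
        calc ‖s‖ = ‖s0 + (s - s0)‖ := by ring_nf
          _ ≤ ‖s0‖ + ‖s - s0‖ := norm_add_le _ _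
          _ ≤ M := by rw [hMdef]; linarith
      have hsre : σ1 ≤ s.re := by
        have h1 : |(s - s0).re| ≤ ‖s - s0‖ := by
          exact Complex.abs_re_le_norm _
        rw [Complex.sub_re] at h1
        have h2 := abs_le.1 (le_of_lt (lt_of_le_of_lt h1 hdist))
        rw [hσ1def]
        linarith [h2.1]
      have hb1 : (1 : ℝ) ≤ ((b : ℕ) : ℝ) := by exact_mod_cast b.one_le
      have hE := xi_E_bound n z1 z2 s b C1 δ0 M (hαne b) (hβne b) hC10 hδ00 hδ01
        (hqs b) (hlo b) (hup b) hnorms hM0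
      refine le_trans hE ?_
      rw [← hKdef]
      apply mul_le_mul_of_nonneg_left _ hK0
      apply Real.rpow_le_rpow_of_exponent_le hb1
      linarith
    have hd := differentiableOn_tsum_of_summable_norm hsum
      (fun b => (hEdiff b).differentiableOn) hopen hbound
    exact ((hd.differentiableAt (hopen.mem_nhds (Metric.mem_ball_self hρ0))).differentiableWithinAt)
  -- overlap identity
  have hover : ∀ s : ℂ, (2 * (n : ℝ) + 1) / 4 < s.re →
      ∑' b : ℕ+, E b s =
        (∑' b : ℕ+, Xi0Term n z1 z2 s b) - riemannZeta (4 * s - 2 * (n : ℂ)) := by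
    intro s hs
    have hwre : (4 * s - 2 * (n : ℂ)).re = 4 * s.re - 2 * (n : ℝ) := by
      simp [Complex.sub_re, Complex.mul_re]
    have hw : 1 < (4 * s - 2 * (n : ℂ)).re := by rw [hwre]; linarith
    have hsum1 : Summable (fun b : ℕ+ => Xi0Term n z1 z2 s b) := (part1 s hs).of_norm
    have hsum2 : Summable (fun b : ℕ+ => 1 / ((b : ℕ) : ℂ) ^ (4 * s - 2 * (n : ℂ))) := by
      apply Summable.of_norm
      have heq : ∀ b : ℕ+, ‖1 / ((b : ℕ) : ℂ) ^ (4 * s - 2 * (n : ℂ))‖ =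
          ((b : ℕ) : ℝ) ^ (-(4 * s.re - 2 * (n : ℝ))) := by
        intro b
        rw [norm_div, norm_one, Complex.norm_natCast_cpow_of_pos b.pos, hwre,
          Real.rpow_neg (by positivity), one_div]
      have hlt : -(4 * s.re - 2 * (n : ℝ)) < -1 := by linarith
      exact (xi_summable_rpow hlt).congr (fun b => (heq b).symm)
    have hζ : ∑' b : ℕ+, 1 / ((b : ℕ) : ℂ) ^ (4 * s - 2 * (n : ℂ)) =
        riemannZeta (4 * s - 2 * (n : ℂ)) := by
      rw [zeta_eq_tsum_one_div_nat_add_one_cpow hw]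
      rw [← Equiv.tsum_eq (Equiv.pnatEquivNat.symm)
        (fun b : ℕ+ => 1 / ((b : ℕ) : ℂ) ^ (4 * s - 2 * (n : ℂ)))]
      apply tsum_congr
      intro k
      have hk : ((Equiv.pnatEquivNat.symm k : ℕ+) : ℕ) = k + 1 := rfl
      rw [hk]
      push_cast
      ring_nf
    calc ∑' b : ℕ+, E b s
        = ∑' b : ℕ+, (Xi0Term n z1 z2 s b - 1 / ((b : ℕ) : ℂ) ^ (4 * s - 2 * (n : ℂ))) := rfl
      _ = (∑' b : ℕ+, Xi0Term n z1 z2 s b) -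
          ∑' b : ℕ+, 1 / ((b : ℕ) : ℂ) ^ (4 * s - 2 * (n : ℂ)) := Summable.tsum_sub hsum1 hsum2
      _ = (∑' b : ℕ+, Xi0Term n z1 z2 s b) - riemannZeta (4 * s - 2 * (n : ℂ)) := by rw [hζ]
  refine ⟨part1, ⟨fun s => 4 * ∑' b : ℕ+, E b s, fun s hs => (hGdiff s hs).const_mul 4, ?_⟩, ?_⟩
  · intro s hs
    show 4 * ∑' b : ℕ+, E b s = Xi0 n z1 z2 s - 4 * riemannZeta (4 * s - 2 * (n : ℂ))
    rw [hover s hs, Xi0]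
    ring
  · -- part (iii)
    obtain ⟨c0, hc0⟩ : ∃ c, Tendsto (fun w : ℂ => riemannZeta w - 1 / (w - 1))
        (𝓝[≠] (1 : ℂ)) (𝓝 c) := ⟨_, tendsto_riemannZeta_sub_one_div⟩
    set ZS : ℂ → ℂ := Function.update (fun w : ℂ => riemannZeta w - 1 / (w - 1)) 1 c0 with hZSdef
    have hZSeq : ∀ w : ℂ, w ≠ 1 → ZS w = riemannZeta w - 1 / (w - 1) := by
      intro w hw
      rw [hZSdef]
      exact Function.update_of_ne hw _ _
    have hne : ∀ w : ℂ, w ≠ 1 → DifferentiableAt ℂ ZS w := by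
      intro w hw
      have h1 : DifferentiableAt ℂ (fun w : ℂ => riemannZeta w - 1 / (w - 1)) w :=
        (differentiableAt_riemannZeta hw).sub ((differentiableAt_const 1).div
          (differentiableAt_id.sub (differentiableAt_const 1)) (sub_ne_zero.2 hw))
      apply h1.congr_of_eventuallyEq
      filter_upwards [isOpen_ne.mem_nhds hw] with x hx
      exact hZSeq x hx
    have hZSdiff : ∀ w : ℂ, DifferentiableAt ℂ ZS w := by
      intro w
      rcases ne_or_eq w 1 with hw | rfl
      · exact hne w hw
      · have hZt : Tendsto ZS (𝓝[≠] (1 : ℂ)) (𝓝 c0) := by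
          apply hc0.congr'
          filter_upwards [self_mem_nhdsWithin] with x hx
          exact (hZSeq x hx).symm
        have hval : ZS 1 = c0 := by rw [hZSdef]; exact Function.update_self _ _ _
        have hcont : ContinuousAt ZS 1 := by
          rw [ContinuousAt, hval, ← nhdsNE_sup_pure (1 : ℂ)]
          exact hZt.sup (hval ▸ tendsto_pure_nhds ZS 1)
        exact (Complex.analyticAt_of_differentiable_on_punctured_nhds_of_continuousAt
          (by filter_upwards [self_mem_nhdsWithin] with z hz; exact hne z hz)
          hcont).differentiableAt
    refine ⟨fun s => 4 * ∑' b : ℕ+, E b s + 4 * ZS (4 * s - 2 * (n : ℂ)), ?_, ?_⟩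
    · intro s hs
      have h1 := (hGdiff s hs).const_mul 4
      have h2 : DifferentiableAt ℂ (fun s : ℂ => 4 * ZS (4 * s - 2 * (n : ℂ))) s := by
        have h3 : DifferentiableAt ℂ (fun s : ℂ => ZS (4 * s - 2 * (n : ℂ))) s :=
          (hZSdiff _).comp s ((differentiableAt_id.const_mul 4).sub (differentiableAt_const _))
        exact h3.const_mul 4
      exact h1.add h2.differentiableWithinAt
    · intro s hs
      have hwre : (4 * s - 2 * (n : ℂ)).re = 4 * s.re - 2 * (n : ℝ) := by
        simp [Complex.sub_re, Complex.mul_re]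
      have hw1 : (4 * s - 2 * (n : ℂ)) ≠ 1 := by
        intro h
        have := congrArg Complex.re h
        rw [hwre] at this
        simp only [Complex.one_re] at this
        linarith
      have hXi : Xi0 n z1 z2 s =
          4 * ∑' b : ℕ+, E b s + 4 * riemannZeta (4 * s - 2 * (n : ℂ)) := by
        rw [Xi0, hover s hs]
        ring
      have hz : riemannZeta (4 * s - 2 * (n : ℂ)) =
          ZS (4 * s - 2 * (n : ℂ)) + 1 / ((4 * s - 2 * (n : ℂ)) - 1) := by
        rw [hZSeq _ hw1]
        ring
      have h4 : 4 * (1 / ((4 * s - 2 * (n : ℂ)) - 1)) = (s - (2 * (n : ℂ) + 1) / 4)⁻¹ := by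
        rw [show (4 * s - 2 * (n : ℂ)) - 1 = 4 * (s - (2 * (n : ℂ) + 1) / 4) by ring]
        rw [one_div, mul_inv, ← mul_assoc]
        norm_num
      rw [hXi, hz]
      linear_combination h4
end
end

section
/- Let k > 2 be an even integer, m ≥ 1 an integer, and z2 ∈ H fixed. Then the series ω_m(z1, conj(z2), k) = ∑_{a,b,c,d ∈ ℤ, ad−bc=m} (c z1 conj(z2) + d conj(z2) − a z1 − b)^{−k} converges absolutely for every z1 ∈ H, and the function z1 ↦ ω_m(z1, conj(z2), k) is a holomorphic cusp form of weight k for SL_2(ℤ): it is holomorphic on H, satisfies ω_m((a z1 + b)/(c z1 + d), conj(z2), k) = (c z1 + d)^k ω_m(z1, conj(z2), k) for all [[a,b],[c,d]] ∈ SL_2(ℤ), and tends to 0 as Im(z1) → ∞. -/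
open Complex Filter Topology

noncomputable section

/-- The modular group `SL₂(ℤ)`. -/
abbrev SL2Z := Matrix.SpecialLinearGroup (Fin 2) ℤ

/-- The Möbius action of `γ ∈ SL₂(ℤ)` on a complex number. -/
def moebius (g : SL2Z) (z : ℂ) : ℂ :=
  (((g 0 0 : ℤ) : ℂ) * z + ((g 0 1 : ℤ) : ℂ)) / (((g 1 0 : ℤ) : ℂ) * z + ((g 1 1 : ℤ) : ℂ))

/-- `μ_γ(z, −w) = c z w + d w − a z − b` for an integer matrix `γ = [[a,b],[c,d]]`. -/
def muM (g : Matrix (Fin 2) (Fin 2) ℤ) (z w : ℂ) : ℂ :=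
  ((g 1 0 : ℤ) : ℂ) * z * w + ((g 1 1 : ℤ) : ℂ) * w - ((g 0 0 : ℤ) : ℂ) * z - ((g 0 1 : ℤ) : ℂ)

/-- Zagier's kernel `ω_m(z₁, w, k) = ∑_{det γ = m} μ_γ(z₁, −w)^{−k}` (with `w = conj z₂`). -/
def omegaKer (m k : ℕ) (z1 w : ℂ) : ℂ :=
  ∑' g : {g : Matrix (Fin 2) (Fin 2) ℤ // g.det = (m : ℤ)}, 1 / (muM g.1 z1 w) ^ k

namespace OmegaAux

abbrev Mdet (m : ℕ) := {g : Matrix (Fin 2) (Fin 2) ℤ // g.det = (m : ℤ)}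

/-- A distinguished top-row entry. -/
def sEnt (g : Matrix (Fin 2) (Fin 2) ℤ) : ℤ := if g 1 0 = 0 then g 0 1 else g 0 0

/-- An injection of the determinant-`m` matrices into `(ℤ²) × ℤ`. -/
def iota (m : ℕ) (g : Mdet m) : (Fin 2 → ℤ) × ℤ := (![g.1 1 0, g.1 1 1], sEnt g.1)

/-- The dominating model function. -/
def model (r q : ℝ) (p : (Fin 2 → ℤ) × ℤ) : ℝ :=
  ‖p.1‖ ^ (-r) * (max 1 |((p.2 : ℤ) : ℝ)|) ^ (-q)

/-- `δ(z)`. -/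
def dd (z : ℂ) : ℝ := z.im / (z.im + ‖z‖ + 1)

/-- `ε(w)`. -/
def ee (w : ℂ) : ℝ := (-w.im) / (1 + 2 * ‖w‖)

lemma norm_pair (c d : ℤ) : ‖![c, d]‖ = max |(c : ℝ)| |(d : ℝ)| := by
  rw [EisensteinSeries.norm_eq_max_natAbs]
  simp [Nat.cast_natAbs, Nat.cast_max]

lemma dd_pos {z : ℂ} (hz : 0 < z.im) : 0 < dd z := by
  have h := norm_nonneg z
  unfold dd
  positivity

lemma dd_ge {z : ℂ} {y₀ R : ℝ} (h0 : 0 < y₀) (h1 : y₀ ≤ z.im) (h2 : ‖z‖ ≤ R) :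
    y₀ / (y₀ + R + 1) ≤ dd z := by
  have h3 := norm_nonneg z
  have hR : 0 ≤ R := le_trans h3 h2
  have hp1 : (0:ℝ) < y₀ + R + 1 := by linarith
  have hp2 : (0:ℝ) < z.im + ‖z‖ + 1 := by linarith
  unfold dd
  rw [div_le_div_iff₀ hp1 hp2]
  nlinarith

lemma ee_pos {w : ℂ} (hw : w.im < 0) : 0 < ee w := by
  have h := norm_nonneg w
  have : 0 < -w.im := by linarith
  unfold ee
  positivity

/-- Lower bound for a linear form. -/
lemma lin_lb {z : ℂ} (hz : 0 < z.im) (a b : ℝ) :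
    dd z * max |a| |b| ≤ ‖(a : ℂ) * z + (b : ℂ)‖ := by
  set y := z.im with hy
  set R := ‖z‖ with hR
  set A := ‖(a : ℂ) * z + (b : ℂ)‖ with hA
  have hRn : 0 ≤ R := norm_nonneg z
  have hAn : 0 ≤ A := norm_nonneg _
  have h1 : |a| * y ≤ A := by
    have him : ((a : ℂ) * z + (b : ℂ)).im = a * y := by
      simp [Complex.add_im, Complex.mul_im, hy]
    calc |a| * y = |((a : ℂ) * z + (b : ℂ)).im| := by
          rw [him, _root_.abs_mul, _root_.abs_of_pos hz]
      _ ≤ A := Complex.abs_im_le_norm _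
  have h2 : |b| ≤ A + |a| * R := by
    have he : (b : ℂ) = ((a : ℂ) * z + (b : ℂ)) - (a : ℂ) * z := by ring
    calc |b| = ‖(b : ℂ)‖ := by rw [Complex.norm_real, Real.norm_eq_abs]
      _ = ‖((a : ℂ) * z + (b : ℂ)) - (a : ℂ) * z‖ := by rw [← he]
      _ ≤ A + ‖(a : ℂ) * z‖ := by
          simpa using norm_sub_le ((a : ℂ) * z + (b : ℂ)) ((a : ℂ) * z)
      _ = A + |a| * R := by rw [norm_mul, Complex.norm_real, Real.norm_eq_abs]
  have hden : 0 < y + R + 1 := by positivity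
  unfold dd
  rw [div_mul_eq_mul_div, div_le_iff₀ hden]
  rcases max_cases |a| |b| with ⟨hmax, _⟩ | ⟨hmax, _⟩ <;> rw [hmax]
  · nlinarith [abs_nonneg a, abs_nonneg b]
  · nlinarith [abs_nonneg a, abs_nonneg b, mul_le_mul_of_nonneg_left h2 hz.le,
      mul_le_mul_of_nonneg_right h1 hRn]

/-- The master lower bound on `|c z w + d w - a z - b|`, integer-coefficient version. -/
lemma master_int {z w : ℂ} (hz : 0 < z.im) (hw : w.im < 0) {m : ℕ} (hm : 1 ≤ m)
    (a b c d : ℤ) (hdet : a * d - b * c = (m : ℤ)) :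
    (1:ℝ) ≤ max |(c : ℝ)| |(d : ℝ)| ∧ (1:ℝ) ≤ max |(a : ℝ)| |(b : ℝ)| ∧
    ee w * dd z * max |(c : ℝ)| |(d : ℝ)|
      ≤ ‖(c : ℂ) * z * w + (d : ℂ) * w - (a : ℂ) * z - (b : ℂ)‖ ∧
    ee w * dd z * max |(a : ℝ)| |(b : ℝ)|
      ≤ ‖(c : ℂ) * z * w + (d : ℂ) * w - (a : ℂ) * z - (b : ℂ)‖ ∧
    ee w * z.im
      ≤ ‖(c : ℂ) * z * w + (d : ℂ) * w - (a : ℂ) * z - (b : ℂ)‖ := by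
  have hdetR : (a : ℝ) * (d : ℝ) - (b : ℝ) * (c : ℝ) = (m : ℝ) := by exact_mod_cast hdet
  have hm' : (1 : ℝ) ≤ (m : ℝ) := by exact_mod_cast hm
  set u : ℂ := (c : ℂ) * z + (d : ℂ) with hu
  set v : ℂ := (a : ℂ) * z + (b : ℂ) with hv
  have hmu : (c : ℂ) * z * w + (d : ℂ) * w - (a : ℂ) * z - (b : ℂ) = u * w - v := by
    rw [hu, hv]; ring
  rw [hmu]
  set A := ‖u * w - v‖ with hA
  have hAn : 0 ≤ A := norm_nonneg _
  have hUn : 0 ≤ ‖u‖ := norm_nonneg _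
  have hVn : 0 ≤ ‖v‖ := norm_nonneg _
  have hWn : 0 ≤ ‖w‖ := norm_nonneg _
  have hy2 : 0 < -w.im := by linarith
  have hW : -w.im ≤ ‖w‖ := by
    have h := Complex.abs_im_le_norm w
    rw [_root_.abs_of_neg hw] at h
    exact h
  have habs1 : ∀ n : ℤ, n ≠ 0 → (1 : ℝ) ≤ |(n : ℝ)| := by
    intro n hn
    exact_mod_cast Int.one_le_abs (by exact_mod_cast hn)
  have hcd : ¬(c = 0 ∧ d = 0) := by
    rintro ⟨h1, h2⟩
    rw [h1, h2] at hdet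
    simp at hdet
    omega
  have hab : ¬(a = 0 ∧ b = 0) := by
    rintro ⟨h1, h2⟩
    rw [h1, h2] at hdet
    simp at hdet
    omega
  have hN1 : (1 : ℝ) ≤ max |(c : ℝ)| |(d : ℝ)| := by
    rcases em (c = 0) with h | h
    · exact le_max_of_le_right (habs1 _ (fun h2 => hcd ⟨h, h2⟩))
    · exact le_max_of_le_left (habs1 _ h)
  have hN1' : (1 : ℝ) ≤ max |(a : ℝ)| |(b : ℝ)| := by
    rcases em (a = 0) with h | h
    · exact le_max_of_le_right (habs1 _ (fun h2 => hab ⟨h, h2⟩))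
    · exact le_max_of_le_left (habs1 _ h)
  -- imaginary part of v * conj u
  have him : (v * (starRingEnd ℂ u)).im = (m : ℝ) * z.im := by
    rw [hu, hv]
    simp only [Complex.mul_im, Complex.add_re, Complex.add_im, Complex.mul_re,
      Complex.intCast_re, Complex.intCast_im, Complex.conj_re, Complex.conj_im,
      Complex.neg_im, Complex.neg_re]
    linear_combination z.im * hdetR
  have habs : (‖u‖) ^ 2 * (-w.im) + (m : ℝ) * z.im ≤ A * ‖u‖ := by
    have e : ((u * w - v) * (starRingEnd ℂ u)).im
        = Complex.normSq u * w.im - (m : ℝ) * z.im := by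
      have e1 : (u * w - v) * (starRingEnd ℂ u)
          = (u * (starRingEnd ℂ u)) * w - v * (starRingEnd ℂ u) := by ring
      rw [e1, Complex.mul_conj, Complex.sub_im, him]
      simp [Complex.mul_im]
    have e2 : |((u * w - v) * (starRingEnd ℂ u)).im|
        = (‖u‖) ^ 2 * (-w.im) + (m : ℝ) * z.im := by
      rw [e, _root_.abs_of_nonpos (by nlinarith [Complex.normSq_nonneg u])]
      rw [← Complex.sq_norm]
      ring
    calc (‖u‖) ^ 2 * (-w.im) + (m : ℝ) * z.im
        = |((u * w - v) * (starRingEnd ℂ u)).im| := e2.symm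
      _ ≤ ‖(u * w - v) * (starRingEnd ℂ u)‖ := Complex.abs_im_le_norm _
      _ = A * ‖u‖ := by rw [norm_mul, Complex.norm_conj]
  have hU : 0 < ‖u‖ := by
    rcases hUn.lt_or_eq with h | h
    · exact h
    · exfalso
      rw [← h] at habs
      nlinarith
  have hA1 : ‖u‖ * (-w.im) ≤ A := by nlinarith
  have hVle : ‖v‖ ≤ A + ‖u‖ * ‖w‖ := by
    have e : v = u * w - (u * w - v) := by ring
    calc ‖v‖ = ‖u * w - (u * w - v)‖ := by rw [← e]
      _ ≤ ‖u * w‖ + ‖u * w - v‖ := by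
          simpa using norm_sub_le (u * w) (u * w - v)
      _ = A + ‖u‖ * ‖w‖ := by rw [norm_mul]; ring
  -- the key inequality ε (|u| + |v|) ≤ A
  have C1 : ee w * (‖u‖ + ‖v‖) ≤ A := by
    have key2 : (-w.im) * (‖u‖ + ‖v‖)
        ≤ A * (1 + 2 * ‖w‖) := by
      nlinarith [mul_le_mul_of_nonneg_left hVle hy2.le,
        mul_le_mul_of_nonneg_right hA1 hWn,
        mul_nonneg (sub_nonneg.2 hW) hAn]
    have hpos : (0:ℝ) < 1 + 2 * ‖w‖ := by positivity
    calc ee w * (‖u‖ + ‖v‖)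
        = ((-w.im) * (‖u‖ + ‖v‖)) / (1 + 2 * ‖w‖) := by
          unfold ee; ring
      _ ≤ (A * (1 + 2 * ‖w‖)) / (1 + 2 * ‖w‖) := by gcongr
      _ = A := by field_simp
  have heps : 0 < ee w := ee_pos hw
  have hCU : ee w * ‖u‖ ≤ A := by nlinarith
  have hCV : ee w * ‖v‖ ≤ A := by nlinarith
  have hlin_cd : dd z * max |(c : ℝ)| |(d : ℝ)| ≤ ‖u‖ := by
    have h := lin_lb hz (c : ℝ) (d : ℝ)
    rwa [Complex.ofReal_intCast, Complex.ofReal_intCast] at h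
  have hlin_ab : dd z * max |(a : ℝ)| |(b : ℝ)| ≤ ‖v‖ := by
    have h := lin_lb hz (a : ℝ) (b : ℝ)
    rwa [Complex.ofReal_intCast, Complex.ofReal_intCast] at h
  have hddp : 0 < dd z := dd_pos hz
  refine ⟨hN1, hN1', ?_, ?_, ?_⟩
  · calc ee w * dd z * max |(c : ℝ)| |(d : ℝ)|
        = ee w * (dd z * max |(c : ℝ)| |(d : ℝ)|) := by ring
      _ ≤ ee w * ‖u‖ := mul_le_mul_of_nonneg_left hlin_cd heps.le
      _ ≤ A := hCU
  · calc ee w * dd z * max |(a : ℝ)| |(b : ℝ)|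
        = ee w * (dd z * max |(a : ℝ)| |(b : ℝ)|) := by ring
      _ ≤ ee w * ‖v‖ := mul_le_mul_of_nonneg_left hlin_ab heps.le
      _ ≤ A := hCV
  · rcases em (c = 0) with h | h
    · have ha : a ≠ 0 := by
        intro h2
        rw [h, h2] at hdet
        simp at hdet
        omega
      have h1 : (1:ℝ) ≤ |(a : ℝ)| := habs1 _ ha
      have hvim : v.im = (a : ℝ) * z.im := by
        rw [hv]; simp [Complex.add_im, Complex.mul_im]
      have h2 : z.im ≤ ‖v‖ := by
        have h3 := Complex.abs_im_le_norm v
        rw [hvim, _root_.abs_mul, _root_.abs_of_pos hz] at h3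
        calc z.im = 1 * z.im := (one_mul _).symm
          _ ≤ |(a : ℝ)| * z.im := mul_le_mul_of_nonneg_right h1 hz.le
          _ ≤ _ := h3
      calc ee w * z.im ≤ ee w * ‖v‖ := mul_le_mul_of_nonneg_left h2 heps.le
        _ ≤ A := hCV
    · have h1 : (1:ℝ) ≤ |(c : ℝ)| := habs1 _ h
      have huim : u.im = (c : ℝ) * z.im := by
        rw [hu]; simp [Complex.add_im, Complex.mul_im]
      have h2 : z.im ≤ ‖u‖ := by
        have h3 := Complex.abs_im_le_norm u
        rw [huim, _root_.abs_mul, _root_.abs_of_pos hz] at h3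
        calc z.im = 1 * z.im := (one_mul _).symm
          _ ≤ |(c : ℝ)| * z.im := mul_le_mul_of_nonneg_right h1 hz.le
          _ ≤ _ := h3
      calc ee w * z.im ≤ ee w * ‖u‖ := mul_le_mul_of_nonneg_left h2 heps.le
        _ ≤ A := hCU

/-- The master lower bound, subtype version. -/
lemma master {m : ℕ} {z w : ℂ} (hz : 0 < z.im) (hw : w.im < 0) (hm : 1 ≤ m)
    (g : Mdet m) :
    1 ≤ ‖![g.1 1 0, g.1 1 1]‖ ∧ (1:ℝ) ≤ max 1 |((sEnt g.1 : ℤ) : ℝ)| ∧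
    ee w * dd z * ‖![g.1 1 0, g.1 1 1]‖ ≤ ‖muM g.1 z w‖ ∧
    ee w * dd z * max 1 |((sEnt g.1 : ℤ) : ℝ)| ≤ ‖muM g.1 z w‖ ∧
    ee w * z.im ≤ ‖muM g.1 z w‖ := by
  have hgdet := g.2
  rw [Matrix.det_fin_two] at hgdet
  obtain ⟨hN1, hN1', hb1, hb2, hb3⟩ := master_int hz hw hm _ _ _ _ hgdet
  have hnorm : ‖![g.1 1 0, g.1 1 1]‖ = max |((g.1 1 0 : ℤ) : ℝ)| |((g.1 1 1 : ℤ) : ℝ)| :=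
    norm_pair _ _
  have hmuE : muM g.1 z w = ((g.1 1 0 : ℤ) : ℂ) * z * w + ((g.1 1 1 : ℤ) : ℂ) * w
      - ((g.1 0 0 : ℤ) : ℂ) * z - ((g.1 0 1 : ℤ) : ℂ) := rfl
  have hs_le : max 1 |((sEnt g.1 : ℤ) : ℝ)| ≤ max |((g.1 0 0 : ℤ) : ℝ)| |((g.1 0 1 : ℤ) : ℝ)| := by
    have h1 : |((sEnt g.1 : ℤ) : ℝ)| ≤ max |((g.1 0 0 : ℤ) : ℝ)| |((g.1 0 1 : ℤ) : ℝ)| := by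
      unfold sEnt
      split
      · exact le_max_right _ _
      · exact le_max_left _ _
    exact max_le hN1' h1
  have heps : 0 < ee w := ee_pos hw
  have hddp : 0 < dd z := dd_pos hz
  refine ⟨by rw [hnorm]; exact hN1, le_max_left _ _, ?_, ?_, ?_⟩
  · rw [hnorm, hmuE]; exact hb1
  · rw [hmuE]
    refine le_trans ?_ hb2
    exact mul_le_mul_of_nonneg_left hs_le (by positivity)
  · rw [hmuE]; exact hb3

/-- μ never vanishes on the upper half plane. -/
lemma muM_ne_zero {m : ℕ} {z w : ℂ} (hz : 0 < z.im) (hw : w.im < 0) (hm : 1 ≤ m)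
    (g : Mdet m) : muM g.1 z w ≠ 0 := by
  have h := (master hz hw hm g).2.2.2.2
  have heps := ee_pos hw
  have : 0 < ‖muM g.1 z w‖ := lt_of_lt_of_le (by positivity) h
  exact norm_pos_iff.mp this

/-- The abstract power-splitting inequality. -/
lemma inv_pow_le {k : ℕ} {θ r q A α β N₁ N₂ : ℝ}
    (hsum : (k : ℝ) = θ + r + q) (hθ : 0 ≤ θ) (hr : 0 ≤ r) (hq : 0 ≤ q)
    (hα : 0 < α) (hβ : 0 < β) (h1 : 1 ≤ N₁) (h2 : 1 ≤ N₂)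
    (hA1 : β ≤ A) (hA2 : α * N₁ ≤ A) (hA3 : α * N₂ ≤ A) :
    1 / A ^ k ≤ ((β ^ θ)⁻¹ * (α ^ (r + q))⁻¹) * (N₁ ^ (-r) * N₂ ^ (-q)) := by
  have hA : 0 < A := lt_of_lt_of_le hβ hA1
  have hN₁ : (0:ℝ) < N₁ := lt_of_lt_of_le one_pos h1
  have hN₂ : (0:ℝ) < N₂ := lt_of_lt_of_le one_pos h2
  have key : β ^ θ * (α ^ (r + q) * (N₁ ^ r * N₂ ^ q)) ≤ A ^ ((k : ℝ)) := by
    rw [hsum, Real.rpow_add hA, Real.rpow_add hA, Real.rpow_add hα]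
    have e1 : β ^ θ ≤ A ^ θ := Real.rpow_le_rpow hβ.le hA1 hθ
    have e2 : α ^ r * N₁ ^ r ≤ A ^ r := by
      rw [← Real.mul_rpow hα.le hN₁.le]
      exact Real.rpow_le_rpow (by positivity) hA2 hr
    have e3 : α ^ q * N₂ ^ q ≤ A ^ q := by
      rw [← Real.mul_rpow hα.le hN₂.le]
      exact Real.rpow_le_rpow (by positivity) hA3 hq
    calc β ^ θ * (α ^ r * α ^ q * (N₁ ^ r * N₂ ^ q))
        = β ^ θ * ((α ^ r * N₁ ^ r) * (α ^ q * N₂ ^ q)) := by ring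
      _ ≤ A ^ θ * (A ^ r * A ^ q) := by
          have p1 : (0:ℝ) ≤ β ^ θ := by positivity
          have p2 : (0:ℝ) ≤ α ^ r * N₁ ^ r := by positivity
          have p3 : (0:ℝ) ≤ α ^ q * N₂ ^ q := by positivity
          have p4 : (0:ℝ) ≤ A ^ θ := by positivity
          have p5 : (0:ℝ) ≤ A ^ r := by positivity
          gcongr
      _ = A ^ θ * A ^ r * A ^ q := by ring
  have hAk : (A : ℝ) ^ k = A ^ ((k : ℝ)) := (Real.rpow_natCast A k).symm
  rw [one_div, hAk, Real.rpow_neg hN₁.le, Real.rpow_neg hN₂.le]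
  have rhs_eq : ((β ^ θ)⁻¹ * (α ^ (r + q))⁻¹) * ((N₁ ^ r)⁻¹ * (N₂ ^ q)⁻¹)
      = (β ^ θ * (α ^ (r + q) * (N₁ ^ r * N₂ ^ q)))⁻¹ := by
    rw [mul_inv, mul_inv]
    ring
  rw [rhs_eq]
  exact inv_anti₀ (by positivity) key

lemma iota_inj {m : ℕ} (hm : 1 ≤ m) : Function.Injective (iota m) := by
  rintro ⟨g, hg⟩ ⟨g', hg'⟩ h
  simp only [iota, Prod.mk.injEq] at h
  obtain ⟨hv, hs⟩ := h
  have h0 : g 1 0 = g' 1 0 := congr_fun hv 0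
  have h1 : g 1 1 = g' 1 1 := congr_fun hv 1
  rw [Matrix.det_fin_two] at hg hg'
  unfold sEnt at hs
  have main : g 0 0 = g' 0 0 ∧ g 0 1 = g' 0 1 := by
    by_cases hc : g 1 0 = 0
    · have hc' : g' 1 0 = 0 := h0 ▸ hc
      rw [if_pos hc, if_pos hc'] at hs
      have hd0 : g 1 1 ≠ 0 := by
        intro h2
        rw [hc, h2] at hg
        simp at hg
        omega
      have e1 : g 0 0 * g 1 1 = (m : ℤ) := by rw [← hg, hc]; ring
      have e2 : g' 0 0 * g 1 1 = (m : ℤ) := by rw [← hg', hc', h1]; ring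
      exact ⟨mul_right_cancel₀ hd0 (e1.trans e2.symm), hs⟩
    · have hc' : g' 1 0 ≠ 0 := h0 ▸ hc
      rw [if_neg hc, if_neg hc'] at hs
      rw [← hs, ← h0, ← h1] at hg'
      have e3 : g 0 1 * g 1 0 = g' 0 1 * g 1 0 := by omega
      exact ⟨hs, mul_right_cancel₀ hc e3⟩
  apply Subtype.ext
  ext i j
  fin_cases i <;> fin_cases j
  · exact main.1
  · exact main.2
  · exact h0
  · exact h1

lemma summable_q {q : ℝ} (hq : 1 < q) :
    Summable (fun s : ℤ => (max 1 |((s : ℤ) : ℝ)|) ^ (-q)) := by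
  have hq0 : -q ≠ 0 := by linarith
  have h0 : Summable (fun s : ℤ => if s = 0 then (1:ℝ) else 0) := by
    apply summable_of_ne_finset_zero (s := {(0:ℤ)})
    intro b hb
    simp only [Finset.mem_singleton] at hb
    rw [if_neg hb]
  refine Summable.of_nonneg_of_le (fun s => Real.rpow_nonneg (by positivity) _)
    (fun s => ?_) ((Real.summable_abs_int_rpow hq).add h0)
  · rcases eq_or_ne s 0 with rfl | hs
    · simp [Real.zero_rpow hq0, Real.one_rpow]
    · have h1 : (0:ℝ) < |((s:ℤ) : ℝ)| := by
        have : ((s:ℤ) : ℝ) ≠ 0 := by exact_mod_cast hs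
        exact abs_pos.mpr this
      have h2 : |((s:ℤ) : ℝ)| ≤ max 1 |((s:ℤ) : ℝ)| := le_max_right _ _
      have h3 := Real.rpow_le_rpow_of_nonpos h1 h2 (by linarith : -q ≤ 0)
      rw [if_neg hs]
      linarith

lemma model_summable {r q : ℝ} (hr : 2 < r) (hq : 1 < q) :
    Summable (fun p : (Fin 2 → ℤ) × ℤ => model r q p) := by
  have h1 : Summable (fun v : Fin 2 → ℤ => ‖(fun v : Fin 2 → ℤ => ‖v‖ ^ (-r)) v‖) := by
    apply (EisensteinSeries.summable_one_div_norm_rpow hr).congr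
    intro v
    rw [Real.norm_of_nonneg (Real.rpow_nonneg (norm_nonneg _) _)]
  have h2 : Summable (fun s : ℤ => ‖(fun s : ℤ => (max 1 |((s : ℤ) : ℝ)|) ^ (-q)) s‖) := by
    apply (summable_q hq).congr
    intro s
    rw [Real.norm_of_nonneg (Real.rpow_nonneg (by positivity) _)]
  have h3 := summable_mul_of_summable_norm h1 h2
  exact h3

lemma dom_summable {m : ℕ} (hm : 1 ≤ m) {r q : ℝ} (hr : 2 < r) (hq : 1 < q) :
    Summable (fun g : Mdet m => model r q (iota m g)) :=
  (model_summable hr hq).comp_injective (iota_inj hm)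

/-- The per-term bound used for summability and local uniform convergence. -/
lemma term_bound {m k : ℕ} (hk4 : 4 ≤ k) {z w : ℂ} (hz : 0 < z.im) (hw : w.im < 0)
    (hm : 1 ≤ m) {δ₀ : ℝ} (hδ : 0 < δ₀) (hδz : δ₀ ≤ dd z) (g : Mdet m) :
    ‖1 / (muM g.1 z w) ^ k‖ ≤
      (((ee w * δ₀) ^ ((0:ℝ)))⁻¹ * ((ee w * δ₀) ^ (((k : ℝ) - 3/2) + 3/2))⁻¹) *
        model ((k : ℝ) - 3/2) (3/2) (iota m g) := by
  obtain ⟨hN1, hN2, hb1, hb2, _⟩ := master hz hw hm g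
  have heps := ee_pos hw
  have hα : 0 < ee w * δ₀ := by positivity
  have hnorm : ‖1 / (muM g.1 z w) ^ k‖ = 1 / (‖muM g.1 z w‖) ^ k := by
    rw [norm_div, norm_one, norm_pow]
  rw [hnorm]
  have hmul : ∀ N : ℝ, 0 ≤ N → ee w * δ₀ * N ≤ ee w * dd z * N := by
    intro N hN
    apply mul_le_mul_of_nonneg_right _ hN
    exact mul_le_mul_of_nonneg_left hδz heps.le
  have hA2 : ee w * δ₀ * ‖![g.1 1 0, g.1 1 1]‖ ≤ ‖muM g.1 z w‖ :=
    le_trans (hmul _ (by linarith)) hb1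
  have hA3 : ee w * δ₀ * max 1 |((sEnt g.1 : ℤ) : ℝ)| ≤ ‖muM g.1 z w‖ :=
    le_trans (hmul _ (by linarith)) hb2
  have hA1 : ee w * δ₀ ≤ ‖muM g.1 z w‖ := by
    calc ee w * δ₀ = ee w * δ₀ * 1 := by ring
      _ ≤ ee w * δ₀ * ‖![g.1 1 0, g.1 1 1]‖ := mul_le_mul_of_nonneg_left hN1 hα.le
      _ ≤ _ := hA2
  have hk8 : (4:ℝ) ≤ (k:ℝ) := by exact_mod_cast hk4
  have hkk : (k : ℝ) = 0 + ((k : ℝ) - 3/2) + 3/2 := by ring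
  exact inv_pow_le hkk le_rfl (by linarith) (by norm_num) hα hα hN1 hN2 hA1 hA2 hA3

/-- Summability of the norms. -/
lemma summable_norm_mu {m k : ℕ} (hk4 : 4 ≤ k) {z w : ℂ} (hz : 0 < z.im) (hw : w.im < 0)
    (hm : 1 ≤ m) :
    Summable (fun g : Mdet m => ‖1 / (muM g.1 z w) ^ k‖) := by
  have hk8 : (4:ℝ) ≤ (k:ℝ) := by exact_mod_cast hk4
  apply Summable.of_nonneg_of_le (fun g => norm_nonneg _)
    (term_bound hk4 hz hw hm (dd_pos hz) le_rfl)
  exact (dom_summable hm (by linarith) (by norm_num)).mul_left _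

end OmegaAux

open OmegaAux

/-- Transformation of μ under right multiplication. -/
lemma muM_mul (g : Matrix (Fin 2) (Fin 2) ℤ) (γ : SL2Z) (z w : ℂ)
    (hD : ((γ 1 0 : ℤ) : ℂ) * z + ((γ 1 1 : ℤ) : ℂ) ≠ 0) :
    muM (g * (γ : Matrix (Fin 2) (Fin 2) ℤ)) z w
      = (((γ 1 0 : ℤ) : ℂ) * z + ((γ 1 1 : ℤ) : ℂ)) * muM g (moebius γ z) w := by
  unfold muM moebius
  simp only [Matrix.mul_apply, Fin.sum_univ_two]
  push_cast
  have hent : ∀ i j : Fin 2, (γ : Matrix (Fin 2) (Fin 2) ℤ) i j = γ i j := fun _ _ => rfl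
  field_simp
  ring

lemma denom_ne {c d : ℤ} (h : ¬(c = 0 ∧ d = 0)) {z : ℂ} (hz : 0 < z.im) :
    ((c : ℤ) : ℂ) * z + ((d : ℤ) : ℂ) ≠ 0 := by
  intro h0
  rcases eq_or_ne c 0 with rfl | hc
  · rw [Int.cast_zero, zero_mul, zero_add] at h0
    exact h ⟨rfl, by exact_mod_cast h0⟩
  · have him : (((c : ℤ) : ℂ) * z + ((d : ℤ) : ℂ)).im = (c : ℝ) * z.im := by
      simp [Complex.add_im, Complex.mul_im]
    rw [h0] at him
    simp only [Complex.zero_im] at him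
    have hc' : ((c : ℤ) : ℝ) ≠ 0 := by exact_mod_cast hc
    exact (mul_ne_zero hc' (ne_of_gt hz)) him.symm

/-- Right multiplication by `γ` as an equivalence of determinant-`m` matrices. -/
def rmulEquiv (m : ℕ) (γ : SL2Z) : Mdet m ≃ Mdet m where
  toFun g := ⟨g.1 * (γ : Matrix (Fin 2) (Fin 2) ℤ), by
    rw [Matrix.det_mul, g.2, Matrix.SpecialLinearGroup.det_coe]; ring⟩
  invFun g := ⟨g.1 * ((γ⁻¹ : SL2Z) : Matrix (Fin 2) (Fin 2) ℤ), by
    rw [Matrix.det_mul, g.2, Matrix.SpecialLinearGroup.det_coe]; ring⟩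
  left_inv g := by
    apply Subtype.ext
    simp only
    rw [mul_assoc, ← Matrix.SpecialLinearGroup.coe_mul, mul_inv_cancel,
      Matrix.SpecialLinearGroup.coe_one, mul_one]
  right_inv g := by
    apply Subtype.ext
    simp only
    rw [mul_assoc, ← Matrix.SpecialLinearGroup.coe_mul, inv_mul_cancel,
      Matrix.SpecialLinearGroup.coe_one, mul_one]

/-- The modular transformation law. -/
lemma omegaKer_modular {m k : ℕ} (hk : k ≠ 0) (w : ℂ) (γ : SL2Z) {z1 : ℂ} (hz1 : 0 < z1.im) :
    omegaKer m k (moebius γ z1) w =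
      (((γ 1 0 : ℤ) : ℂ) * z1 + ((γ 1 1 : ℤ) : ℂ)) ^ k * omegaKer m k z1 w := by
  set D := ((γ 1 0 : ℤ) : ℂ) * z1 + ((γ 1 1 : ℤ) : ℂ) with hDdef
  have hcd : ¬((γ 1 0 : ℤ) = 0 ∧ (γ 1 1 : ℤ) = 0) := by
    rintro ⟨h1, h2⟩
    have hdet := Matrix.SpecialLinearGroup.det_coe γ
    rw [Matrix.det_fin_two] at hdet
    have e1 : (γ : Matrix (Fin 2) (Fin 2) ℤ) 1 0 = γ 1 0 := rfl
    have e2 : (γ : Matrix (Fin 2) (Fin 2) ℤ) 1 1 = γ 1 1 := rfl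
    rw [e1, e2, h1, h2] at hdet
    simp at hdet
  have hD : D ≠ 0 := denom_ne hcd hz1
  have key : ∀ h : Matrix (Fin 2) (Fin 2) ℤ,
      1 / (muM h (moebius γ z1) w) ^ k
        = D ^ k * (1 / (muM (h * (γ : Matrix (Fin 2) (Fin 2) ℤ)) z1 w) ^ k) := by
    intro h
    have e := muM_mul h γ z1 w hD
    rw [e, mul_pow]
    rcases eq_or_ne (muM h (moebius γ z1) w) 0 with h0 | h0
    · rw [h0]
      simp [zero_pow hk]
    · field_simp
      rw [← hDdef, div_self (pow_ne_zero _ hD)]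
  calc omegaKer m k (moebius γ z1) w
      = ∑' g : Mdet m, 1 / (muM g.1 (moebius γ z1) w) ^ k := rfl
    _ = ∑' g : Mdet m, D ^ k * (1 / (muM ((rmulEquiv m γ) g).1 z1 w) ^ k) :=
        tsum_congr fun g => key g.1
    _ = D ^ k * ∑' g : Mdet m, 1 / (muM ((rmulEquiv m γ) g).1 z1 w) ^ k := tsum_mul_left
    _ = D ^ k * ∑' g : Mdet m, 1 / (muM g.1 z1 w) ^ k := by
        rw [(rmulEquiv m γ).tsum_eq (fun g : Mdet m => 1 / (muM g.1 z1 w) ^ k)]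
    _ = D ^ k * omegaKer m k z1 w := rfl

/-- The translation matrices. -/
def Tmat (n : ℤ) : SL2Z := ⟨!![1, n; 0, 1], by simp [Matrix.det_fin_two_of]⟩

lemma omegaKer_periodic {m k : ℕ} (hk : k ≠ 0) (w : ℂ) (n : ℤ) {z : ℂ} (hz : 0 < z.im) :
    omegaKer m k (z + (n : ℂ)) w = omegaKer m k z w := by
  have h00 : (Tmat n 0 0 : ℤ) = 1 := rfl
  have h01 : (Tmat n 0 1 : ℤ) = n := rfl
  have h10 : (Tmat n 1 0 : ℤ) = 0 := rfl
  have h11 : (Tmat n 1 1 : ℤ) = 1 := rfl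
  have hmo : moebius (Tmat n) z = z + (n : ℂ) := by
    unfold moebius
    rw [h00, h01, h10, h11]
    push_cast
    simp
  have h := omegaKer_modular (m := m) hk w (Tmat n) hz
  rw [hmo, h10, h11] at h
  simpa using h

/-- For even `k > 2`, the series `ω_m(z₁, conj z₂, k)` converges absolutely and defines, as a
function of `z₁`, a holomorphic cusp form of weight `k` for `SL₂(ℤ)`. -/
theorem omegaKer_is_cusp_form (k m : ℕ) (hk : Even k) (hk2 : 2 < k) (hm : 1 ≤ m)
    (z2 : ℂ) (hz2 : 0 < z2.im) :
    (∀ z1 : ℂ, 0 < z1.im →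
      Summable (fun g : {g : Matrix (Fin 2) (Fin 2) ℤ // g.det = (m : ℤ)} =>
        ‖1 / (muM g.1 z1 (starRingEnd ℂ z2)) ^ k‖)) ∧
    DifferentiableOn ℂ (fun z1 => omegaKer m k z1 (starRingEnd ℂ z2)) {z : ℂ | 0 < z.im} ∧
    (∀ g : SL2Z, ∀ z1 : ℂ, 0 < z1.im →
      omegaKer m k (moebius g z1) (starRingEnd ℂ z2) =
        (((g 1 0 : ℤ) : ℂ) * z1 + ((g 1 1 : ℤ) : ℂ)) ^ k * omegaKer m k z1 (starRingEnd ℂ z2)) ∧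
    Tendsto (fun z1 => omegaKer m k z1 (starRingEnd ℂ z2))
      (Filter.comap Complex.im atTop) (𝓝 0) := by
  have hk4 : 4 ≤ k := by
    rcases hk with ⟨t, ht⟩
    omega
  have hk0 : k ≠ 0 := by omega
  set w : ℂ := starRingEnd ℂ z2 with hw_def
  have hw : w.im < 0 := by
    rw [hw_def]
    simpa [Complex.conj_im] using hz2
  have heps : 0 < ee w := ee_pos hw
  refine ⟨fun z1 hz1 => summable_norm_mu hk4 hz1 hw hm, ?_, ?_, ?_⟩
  -- Differentiability
  · intro z₀ hz₀
    simp only [Set.mem_setOf_eq] at hz₀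
    set r₀ : ℝ := z₀.im / 2 with hr₀def
    have hr₀ : 0 < r₀ := by positivity
    have hball : ∀ z ∈ Metric.ball z₀ r₀, r₀ < z.im ∧ ‖z‖ ≤ ‖z₀‖ + r₀ := by
      intro z hzb
      rw [Metric.mem_ball, Complex.dist_eq] at hzb
      constructor
      · have h1 : |(z - z₀).im| ≤ ‖z - z₀‖ := Complex.abs_im_le_norm _
        rw [Complex.sub_im] at h1
        have h2 := (abs_le.mp h1).1
        have h3 : z₀.im - ‖z - z₀‖ ≤ z.im := by linarith
        calc r₀ = z₀.im - r₀ := by rw [hr₀def]; ring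
          _ < z₀.im - ‖z - z₀‖ := by linarith
          _ ≤ z.im := h3
      · have he : z = z₀ + (z - z₀) := by ring
        calc ‖z‖ = ‖z₀ + (z - z₀)‖ := by rw [← he]
          _ ≤ ‖z₀‖ + ‖z - z₀‖ := by
              simpa using norm_add_le z₀ (z - z₀)
          _ ≤ ‖z₀‖ + r₀ := by linarith
    have hsub : Metric.ball z₀ r₀ ⊆ {z : ℂ | 0 < z.im} := by
      intro z hzb
      exact lt_trans hr₀ (hball z hzb).1
    set δ₀ : ℝ := r₀ / (r₀ + (‖z₀‖ + r₀) + 1) with hδ₀def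
    have hR : 0 ≤ ‖z₀‖ + r₀ := by positivity
    have hδ₀ : 0 < δ₀ := by rw [hδ₀def]; positivity
    have hδdd : ∀ z ∈ Metric.ball z₀ r₀, δ₀ ≤ dd z := by
      intro z hzb
      exact dd_ge hr₀ (hball z hzb).1.le (hball z hzb).2
    have hdiff : DifferentiableOn ℂ
        (fun z => ∑' g : Mdet m, 1 / (muM g.1 z w) ^ k) (Metric.ball z₀ r₀) := by
      apply differentiableOn_tsum_of_summable_norm
        (u := fun g : Mdet m =>
          (((ee w * δ₀) ^ ((0:ℝ)))⁻¹ * ((ee w * δ₀) ^ (((k : ℝ) - 3/2) + 3/2))⁻¹) *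
            model ((k : ℝ) - 3/2) (3/2) (iota m g))
      · have hk8 : (4:ℝ) ≤ (k:ℝ) := by exact_mod_cast hk4
        exact (dom_summable hm (by linarith) (by norm_num)).mul_left _
      · intro g
        have hne : ∀ z ∈ Metric.ball z₀ r₀, muM g.1 z w ≠ 0 := fun z hzb =>
          muM_ne_zero (hsub hzb) hw hm g
        apply DifferentiableOn.div (differentiableOn_const 1)
        · apply DifferentiableOn.pow
          have hdm : Differentiable ℂ (fun z : ℂ =>
              ((g.1 1 0 : ℤ) : ℂ) * z * w + ((g.1 1 1 : ℤ) : ℂ) * w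
                - ((g.1 0 0 : ℤ) : ℂ) * z - ((g.1 0 1 : ℤ) : ℂ)) := by
            fun_prop
          exact hdm.differentiableOn
        · intro z hzb
          exact pow_ne_zero _ (hne z hzb)
      · exact Metric.isOpen_ball
      · intro g z hzb
        exact term_bound hk4 (hsub hzb) hw hm hδ₀ (hδdd z hzb) g
    have hda : DifferentiableAt ℂ (fun z => ∑' g : Mdet m, 1 / (muM g.1 z w) ^ k) z₀ :=
      hdiff.differentiableAt (Metric.isOpen_ball.mem_nhds (Metric.mem_ball_self hr₀))
    exact hda.differentiableWithinAt
  -- Modularity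
  · intro γ z1 hz1
    exact omegaKer_modular hk0 w γ hz1
  -- Decay at infinity
  · have hk8 : (4:ℝ) ≤ (k:ℝ) := by exact_mod_cast hk4
    set C₀ : ℝ := ∑' g : Mdet m, model ((k : ℝ) - 7/4) (5/4) (iota m g) with hC₀def
    set K : ℝ := ((ee w * 4⁻¹) ^ (((k : ℝ) - 7/4) + 5/4))⁻¹ * C₀ with hKdef
    have hdom : Summable (fun g : Mdet m => model ((k : ℝ) - 7/4) (5/4) (iota m g)) :=
      dom_summable hm (by linarith) (by norm_num)
    -- strip bound
    have strip : ∀ z : ℂ, 1 ≤ z.im → |z.re| ≤ 1 →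
        ‖omegaKer m k z w‖ ≤ ((ee w * z.im) ^ ((2:ℝ)⁻¹))⁻¹ * K := by
      intro z hzim hzre
      have hz : 0 < z.im := lt_of_lt_of_le one_pos hzim
      have hdd4 : (4:ℝ)⁻¹ ≤ dd z := by
        have habs : ‖z‖ ≤ |z.re| + |z.im| := Complex.norm_le_abs_re_add_abs_im z
        have him : |z.im| = z.im := _root_.abs_of_pos hz
        have hpos : (0:ℝ) < z.im + ‖z‖ + 1 := by
          have := norm_nonneg z
          linarith
        unfold dd
        rw [le_div_iff₀ hpos]
        nlinarith [norm_nonneg z]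
      have hβ : 0 < ee w * z.im := by positivity
      have hα : 0 < ee w * 4⁻¹ := by positivity
      have hterm : ∀ g : Mdet m, ‖1 / (muM g.1 z w) ^ k‖ ≤
          (((ee w * z.im) ^ ((2:ℝ)⁻¹))⁻¹ * ((ee w * 4⁻¹) ^ (((k : ℝ) - 7/4) + 5/4))⁻¹) *
            model ((k : ℝ) - 7/4) (5/4) (iota m g) := by
        intro g
        obtain ⟨hN1, hN2, hb1, hb2, hb3⟩ := master hz hw hm g
        have hnorm : ‖1 / (muM g.1 z w) ^ k‖ = 1 / (‖muM g.1 z w‖) ^ k := by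
          rw [norm_div, norm_one, norm_pow]
        rw [hnorm]
        have hmul : ∀ N : ℝ, 0 ≤ N →
            ee w * 4⁻¹ * N ≤ ee w * dd z * N := by
          intro N hN
          apply mul_le_mul_of_nonneg_right _ hN
          exact mul_le_mul_of_nonneg_left hdd4 heps.le
        have hA2 : ee w * 4⁻¹ * ‖![g.1 1 0, g.1 1 1]‖ ≤ ‖muM g.1 z w‖ :=
          le_trans (hmul _ (by linarith)) hb1
        have hA3 : ee w * 4⁻¹ * max 1 |((sEnt g.1 : ℤ) : ℝ)| ≤ ‖muM g.1 z w‖ :=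
          le_trans (hmul _ (by linarith)) hb2
        have hkk : (k : ℝ) = 2⁻¹ + ((k : ℝ) - 7/4) + 5/4 := by ring
        exact inv_pow_le hkk (by norm_num) (by linarith) (by norm_num) hα hβ hN1 hN2 hb3 hA2 hA3
      have hsum := summable_norm_mu (m := m) (k := k) hk4 hz hw hm
      calc ‖omegaKer m k z w‖ ≤ ∑' g : Mdet m, ‖1 / (muM g.1 z w) ^ k‖ :=
            norm_tsum_le_tsum_norm hsum
        _ ≤ ∑' g : Mdet m,
            ((((ee w * z.im) ^ ((2:ℝ)⁻¹))⁻¹ * ((ee w * 4⁻¹) ^ (((k : ℝ) - 7/4) + 5/4))⁻¹) *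
              model ((k : ℝ) - 7/4) (5/4) (iota m g)) :=
            Summable.tsum_le_tsum hterm hsum (hdom.mul_left _)
        _ = (((ee w * z.im) ^ ((2:ℝ)⁻¹))⁻¹ * ((ee w * 4⁻¹) ^ (((k : ℝ) - 7/4) + 5/4))⁻¹) * C₀ :=
            tsum_mul_left
        _ = ((ee w * z.im) ^ ((2:ℝ)⁻¹))⁻¹ * K := by rw [hKdef]; ring
    -- eventual bound
    have hev : ∀ᶠ z : ℂ in Filter.comap Complex.im atTop,
        ‖omegaKer m k z w‖ ≤ ((ee w * z.im) ^ ((2:ℝ)⁻¹))⁻¹ * K := by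
      have hmem : {z : ℂ | 1 ≤ z.im} ∈ Filter.comap Complex.im atTop :=
        Filter.preimage_mem_comap (Filter.Ici_mem_atTop 1)
      filter_upwards [hmem] with z hz1
      have hz : 0 < z.im := lt_of_lt_of_le one_pos hz1
      have hper : omegaKer m k (z + ((-⌊z.re⌋ : ℤ) : ℂ)) w = omegaKer m k z w :=
        omegaKer_periodic hk0 w (-⌊z.re⌋) hz
      have him' : (z + ((-⌊z.re⌋ : ℤ) : ℂ)).im = z.im := by
        simp [Complex.add_im, Complex.intCast_im]
      have hre' : |(z + ((-⌊z.re⌋ : ℤ) : ℂ)).re| ≤ 1 := by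
        have h1 : (z + ((-⌊z.re⌋ : ℤ) : ℂ)).re = z.re - ⌊z.re⌋ := by
          rw [Complex.add_re, Complex.intCast_re]
          push_cast
          ring
        rw [h1]
        have h2 := Int.fract_nonneg z.re
        have h3 := Int.fract_lt_one z.re
        rw [Int.fract] at h2 h3
        rw [abs_le]
        constructor <;> linarith
      have hstr := strip (z + ((-⌊z.re⌋ : ℤ) : ℂ)) (by rw [him']; exact hz1) hre'
      rw [hper, him'] at hstr
      exact hstr
    apply squeeze_zero_norm' hev
    -- the bound tends to zero
    have h1 : Tendsto Complex.im (Filter.comap Complex.im atTop) atTop := tendsto_comap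
    have h2 : Tendsto (fun y : ℝ => ((ee w * y) ^ ((2:ℝ)⁻¹))⁻¹ * K) atTop (𝓝 0) := by
      have ha : Tendsto (fun y : ℝ => ee w * y) atTop atTop :=
        Tendsto.const_mul_atTop heps tendsto_id
      have hb : Tendsto (fun y : ℝ => (ee w * y) ^ ((2:ℝ)⁻¹)) atTop atTop :=
        (tendsto_rpow_atTop (by norm_num)).comp ha
      have hc : Tendsto (fun y : ℝ => ((ee w * y) ^ ((2:ℝ)⁻¹))⁻¹) atTop (𝓝 0) :=
        tendsto_inv_atTop_zero.comp hb
      have hd := hc.mul_const K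
      rw [zero_mul] at hd
      exact hd
    exact h2.comp h1
end
end
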